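/- arXiv:2304.13099 — 6 statements merged into one kernel-verified Lean document; each statement's English description precedes it below -/
import Mathlib

section
/- Let a₀ > 0 and φ ∈ (π/2, π]. Set d = φ/2 − π/4, a_I = (a₀/cos φ)·cos(φ/2 + π/4), and b_I = −(a₀/cos φ)·sin(φ/2 + π/4). Then a_I > 0, b_I > 0, and the following three identities hold: (i) a_I·cos d + b_I·sin d = a₀, and consequently Re z(ξ + i·d) = a₀·(1 − cosh ξ) ≤ 0 for every real ξ; (ii) a_I·sin d − b_I·cos d = a₀·tan φ; (iii) b_I·sin d − a_I·cos d = 0. -/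
/-- For `a₀ > 0`, `φ ∈ (π/2, π]`, `d = φ/2 − π/4`,
`a_I = (a₀/cos φ)·cos(φ/2 + π/4)`, `b_I = −(a₀/cos φ)·sin(φ/2 + π/4)`:
both semi-axes are positive, the hyperbola `z(ξ + i d)` has its vertex at `0`
(`Re z(ξ + i d) = a₀(1 − cosh ξ) ≤ 0`), its asymptote angle is `φ`
(`a_I sin d − b_I cos d = a₀ tan φ`), and the critical hyperbola has vertical
asymptotes (`b_I sin d − a_I cos d = 0`). -/
theorem contour_parameters_properties (a₀ φ : ℝ) (ha : 0 < a₀)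
    (hφ : φ ∈ Set.Ioc (Real.pi / 2) Real.pi)
    (d aI bI : ℝ)
    (hd : d = φ / 2 - Real.pi / 4)
    (haI : aI = (a₀ / Real.cos φ) * Real.cos (φ / 2 + Real.pi / 4))
    (hbI : bI = -((a₀ / Real.cos φ) * Real.sin (φ / 2 + Real.pi / 4))) :
    0 < aI ∧ 0 < bI ∧
    (aI * Real.cos d + bI * Real.sin d = a₀ ∧
      ∀ ξ : ℝ,
        ((a₀ : ℂ) - (aI : ℂ) * Complex.cosh ((ξ : ℂ) + (d : ℂ) * Complex.I)
            + Complex.I * (bI : ℂ) * Complex.sinh ((ξ : ℂ) + (d : ℂ) * Complex.I)).re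
          = a₀ * (1 - Real.cosh ξ) ∧ a₀ * (1 - Real.cosh ξ) ≤ 0) ∧
    aI * Real.sin d - bI * Real.cos d = a₀ * Real.tan φ ∧
    bI * Real.sin d - aI * Real.cos d = 0 := by
  obtain ⟨hφ1, hφ2⟩ := hφ
  have hπ := Real.pi_pos
  set θ : ℝ := φ / 2 + Real.pi / 4 with hθ
  have hcosφ : Real.cos φ < 0 :=
    Real.cos_neg_of_pi_div_two_lt_of_lt hφ1 (by linarith)
  have hθlt : θ < Real.pi := by rw [hθ]; linarith
  have hθgt : Real.pi / 2 < θ := by rw [hθ]; linarith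
  have hsinθ : 0 < Real.sin θ := Real.sin_pos_of_pos_of_lt_pi (by rw [hθ]; linarith) hθlt
  have hcosθ : Real.cos θ < 0 :=
    Real.cos_neg_of_pi_div_two_lt_of_lt hθgt (by linarith)
  have hC : a₀ / Real.cos φ < 0 := div_neg_of_pos_of_neg ha hcosφ
  have haIpos : 0 < aI := by rw [haI]; exact mul_pos_of_neg_of_neg hC hcosθ
  have hbIpos : 0 < bI := by
    rw [hbI]; exact neg_pos.mpr (mul_neg_of_neg_of_pos hC hsinθ)
  -- trig identities
  have hcosd : Real.cos d = Real.sin θ := by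
    rw [hd]
    have : φ / 2 - Real.pi / 4 = θ - Real.pi / 2 := by rw [hθ]; ring
    rw [this, Real.cos_sub_pi_div_two]
  have hsind : Real.sin d = -Real.cos θ := by
    rw [hd]
    have : φ / 2 - Real.pi / 4 = θ - Real.pi / 2 := by rw [hθ]; ring
    rw [this, Real.sin_sub_pi_div_two]
  have key1 : 2 * Real.sin θ * Real.cos θ = Real.cos φ := by
    have h2θ : 2 * θ = φ + Real.pi / 2 := by rw [hθ]; ring
    have := Real.sin_two_mul θ
    rw [h2θ, Real.sin_add_pi_div_two] at this
    linarith
  have key2 : Real.sin θ ^ 2 - Real.cos θ ^ 2 = Real.sin φ := by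
    have h2θ : 2 * θ = φ + Real.pi / 2 := by rw [hθ]; ring
    have := Real.cos_two_mul' θ
    rw [h2θ, Real.cos_add_pi_div_two] at this
    linarith
  have hcosφne : Real.cos φ ≠ 0 := ne_of_lt hcosφ
  have hA : aI * Real.cos d + bI * Real.sin d = a₀ := by
    rw [haI, hbI, hcosd, hsind]
    field_simp
    linear_combination key1
  refine ⟨haIpos, hbIpos, ⟨hA, ?_⟩, ?_, ?_⟩
  · intro ξ
    constructor
    · rw [Complex.cosh_add, Complex.sinh_add, Complex.cosh_mul_I, Complex.sinh_mul_I,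
        ← Complex.ofReal_cosh, ← Complex.ofReal_sinh, ← Complex.ofReal_cos,
        ← Complex.ofReal_sin]
      simp [Complex.add_re, Complex.sub_re, Complex.mul_re, Complex.mul_im,
        Complex.cos_ofReal_re, Complex.sin_ofReal_re]
      linear_combination -Real.cosh ξ * hA
    · have h1 : 1 ≤ Real.cosh ξ := Real.one_le_cosh ξ
      nlinarith
  · rw [haI, hbI, hcosd, hsind, Real.tan_eq_sin_div_cos]
    field_simp
    linear_combination key2
  · rw [haI, hbI, hcosd, hsind]; ring
end

section
/- Let a, b, a₀ be real numbers with 0 < a₀ < a ≤ b. Then for every real ξ, |−a·sinh ξ + i·b·cosh ξ| ≤ (b/(a − a₀)) · |a₀ − a·cosh ξ + i·b·sinh ξ|. Equivalently, along the hyperbola z(ξ) = a₀ − a·cosh ξ + i·b·sinh ξ (whose derivative is z'(ξ) = −a·sinh ξ + i·b·cosh ξ, and which never vanishes under these hypotheses), one has |z'(ξ)/z(ξ)| ≤ b/(a − a₀). -/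
/-- For `0 < a₀ < a ≤ b`, along the hyperbola
`z(ξ) = a₀ − a cosh ξ + i b sinh ξ` (which never vanishes), the derivative
`z'(ξ) = −a sinh ξ + i b cosh ξ` satisfies `|z'(ξ)| ≤ (b/(a − a₀)) |z(ξ)|`. -/
theorem hyperbola_log_derivative_bound (a b a₀ : ℝ) (h₀ : 0 < a₀) (h₁ : a₀ < a)
    (h₂ : a ≤ b) (ξ : ℝ) :
    ((a₀ : ℂ) - (a : ℂ) * Complex.cosh (ξ : ℂ)
        + Complex.I * (b : ℂ) * Complex.sinh (ξ : ℂ) ≠ 0) ∧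
    ‖-(a : ℂ) * Complex.sinh (ξ : ℂ) + Complex.I * (b : ℂ) * Complex.cosh (ξ : ℂ)‖
      ≤ (b / (a - a₀)) *
        ‖(a₀ : ℂ) - (a : ℂ) * Complex.cosh (ξ : ℂ)
          + Complex.I * (b : ℂ) * Complex.sinh (ξ : ℂ)‖ := by
  have hcos : Complex.cosh (ξ : ℂ) = ((Real.cosh ξ : ℝ) : ℂ) := (Complex.ofReal_cosh ξ).symm
  have hsin : Complex.sinh (ξ : ℂ) = ((Real.sinh ξ : ℝ) : ℂ) := (Complex.ofReal_sinh ξ).symm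
  set c := Real.cosh ξ with hcdef
  set s := Real.sinh ξ with hsdef
  have hc1 : 1 ≤ c := Real.one_le_cosh ξ
  have hcs : c ^ 2 = s ^ 2 + 1 := Real.cosh_sq ξ
  have hzre : ((a₀ : ℂ) - (a : ℂ) * Complex.cosh (ξ : ℂ)
      + Complex.I * (b : ℂ) * Complex.sinh (ξ : ℂ)).re = a₀ - a * c := by
    simp [hcos, hsin]
  have hzim : ((a₀ : ℂ) - (a : ℂ) * Complex.cosh (ξ : ℂ)
      + Complex.I * (b : ℂ) * Complex.sinh (ξ : ℂ)).im = b * s := by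
    simp [hcos, hsin]
  have hwre : (-(a : ℂ) * Complex.sinh (ξ : ℂ) + Complex.I * (b : ℂ) * Complex.cosh (ξ : ℂ)).re
      = -(a * s) := by simp [hcos, hsin]
  have hwim : (-(a : ℂ) * Complex.sinh (ξ : ℂ) + Complex.I * (b : ℂ) * Complex.cosh (ξ : ℂ)).im
      = b * c := by simp [hcos, hsin]
  have hrez : a₀ - a * c < 0 := by nlinarith
  constructor
  · intro h
    rw [Complex.ext_iff] at h
    rw [hzre] at h
    simp at h
    nlinarith [h.1]
  · have hk : (0:ℝ) < a - a₀ := by linarith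
    have hkpos : (0:ℝ) ≤ b / (a - a₀) := div_nonneg (by linarith) hk.le
    rw [Complex.norm_def, Complex.norm_def, Complex.normSq_apply, Complex.normSq_apply,
      hzre, hzim, hwre, hwim]
    have h1 : (b / (a - a₀)) * Real.sqrt ((a₀ - a * c) * (a₀ - a * c) + b * s * (b * s))
        = Real.sqrt ((b / (a - a₀))^2 * ((a₀ - a * c) * (a₀ - a * c) + b * s * (b * s))) := by
      rw [Real.sqrt_mul (sq_nonneg _), Real.sqrt_sq hkpos]
    rw [h1]
    apply Real.sqrt_le_sqrt
    rw [div_pow, div_mul_eq_mul_div, le_div_iff₀ (by positivity)]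
    have h3 : (0:ℝ) ≤ a₀ * (c - 1) * ((2*a - a₀) * c - a₀) := by
      have : (2*a - a₀) * 1 ≤ (2*a - a₀) * c := by nlinarith
      have h5 : (0:ℝ) ≤ (2*a - a₀) * c - a₀ := by nlinarith
      have h6 : (0:ℝ) ≤ c - 1 := by linarith
      positivity
    have h4 : (0:ℝ) ≤ s^2 * ((b^2 - a*(a - a₀)) * (b^2 + a*(a - a₀))) := by
      have h5 : (0:ℝ) ≤ b^2 - a*(a - a₀) := by nlinarith
      have h6 : (0:ℝ) ≤ b^2 + a*(a - a₀) := by nlinarith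
      positivity
    nlinarith [mul_nonneg (sq_nonneg b) h3, h4]
end

section
/- Let a, b, a₀ be real numbers with 0 < a₀ < a ≤ b. Then for every real ξ, |−a·sinh ξ + i·b·cosh ξ| · cosh ξ · (a − a₀)² ≤ b · |a₀ − a·cosh ξ + i·b·sinh ξ|². Equivalently, along the hyperbola z(ξ) = a₀ − a·cosh ξ + i·b·sinh ξ with derivative z'(ξ) = −a·sinh ξ + i·b·cosh ξ, one has |z'(ξ)/z(ξ)²| ≤ b/(cosh ξ · (a − a₀)²). -/
/-- For `0 < a₀ < a ≤ b`, along the hyperbola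
`z(ξ) = a₀ − a cosh ξ + i b sinh ξ` with derivative
`z'(ξ) = −a sinh ξ + i b cosh ξ`, one has
`|z'(ξ)| · cosh ξ · (a − a₀)² ≤ b · |z(ξ)|²`, i.e.
`|z'(ξ)/z(ξ)²| ≤ b/(cosh ξ · (a − a₀)²)`. -/
theorem hyperbola_second_derivative_bound (a b a₀ : ℝ) (h₀ : 0 < a₀) (h₁ : a₀ < a)
    (h₂ : a ≤ b) (ξ : ℝ) :
    ‖-(a : ℂ) * Complex.sinh (ξ : ℂ) + Complex.I * (b : ℂ) * Complex.cosh (ξ : ℂ)‖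
        * Real.cosh ξ * (a - a₀) ^ 2
      ≤ b * ‖(a₀ : ℂ) - (a : ℂ) * Complex.cosh (ξ : ℂ)
          + Complex.I * (b : ℂ) * Complex.sinh (ξ : ℂ)‖ ^ 2 := by
  set s := Real.sinh ξ with hs
  set c := Real.cosh ξ with hc
  have hc1 : 1 ≤ c := Real.one_le_cosh ξ
  have hsq : c ^ 2 = s ^ 2 + 1 := Real.cosh_sq ξ
  have e1 : ‖-(a : ℂ) * Complex.sinh (ξ : ℂ) + Complex.I * (b : ℂ) * Complex.cosh (ξ : ℂ)‖
      = Real.sqrt (a ^ 2 * s ^ 2 + b ^ 2 * c ^ 2) := by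
    rw [← Complex.ofReal_sinh, ← Complex.ofReal_cosh, Complex.norm_def, Complex.normSq_apply]
    simp [← hs, ← hc]
    ring_nf
  have e2 : ‖(a₀ : ℂ) - (a : ℂ) * Complex.cosh (ξ : ℂ)
      + Complex.I * (b : ℂ) * Complex.sinh (ξ : ℂ)‖ ^ 2 = (a₀ - a * c) ^ 2 + b ^ 2 * s ^ 2 := by
    rw [← Complex.ofReal_sinh, ← Complex.ofReal_cosh, Complex.sq_norm, Complex.normSq_apply]
    simp [← hs, ← hc]
    ring
  rw [e1, e2]
  set r := Real.sqrt (a ^ 2 * s ^ 2 + b ^ 2 * c ^ 2) with hr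
  have hr0 : 0 ≤ r := Real.sqrt_nonneg _
  have hr2 : r ^ 2 = a ^ 2 * s ^ 2 + b ^ 2 * c ^ 2 := by
    rw [hr]
    exact Real.sq_sqrt (by positivity)
  have hb : 0 < b := lt_of_lt_of_le (h₀.trans h₁) h₂
  have key : r * c ≤ b * (2 * c ^ 2 - 1) := by
    have ha2 : a ^ 2 ≤ b ^ 2 := by nlinarith
    have h1 : (r * c) ^ 2 ≤ (b * (2 * c ^ 2 - 1)) ^ 2 := by
      nlinarith [mul_nonneg (mul_nonneg (sub_nonneg.2 ha2) (sq_nonneg s)) (sq_nonneg c),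
        mul_nonneg (mul_nonneg (sq_nonneg b) (by nlinarith : (0:ℝ) ≤ 2 * c ^ 2 - 1))
          (by nlinarith : (0:ℝ) ≤ c ^ 2 - 1)]
    nlinarith [mul_nonneg hr0 (le_trans zero_le_one hc1),
      mul_pos hb (by nlinarith : (0:ℝ) < 2 * c ^ 2 - 1)]
  have hca : 0 ≤ a * c - a₀ + (a - a₀) * c := by nlinarith
  have h3 : (a - a₀) ^ 2 * c ^ 2 ≤ (a₀ - a * c) ^ 2 := by
    nlinarith [mul_nonneg (mul_nonneg h₀.le (sub_nonneg.2 hc1)) hca]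
  have hab : (a - a₀) ^ 2 ≤ b ^ 2 := by nlinarith
  have h4 : (a - a₀) ^ 2 * s ^ 2 ≤ b ^ 2 * s ^ 2 :=
    mul_le_mul_of_nonneg_right hab (sq_nonneg s)
  calc r * c * (a - a₀) ^ 2 ≤ b * (2 * c ^ 2 - 1) * (a - a₀) ^ 2 :=
        mul_le_mul_of_nonneg_right key (sq_nonneg _)
    _ = b * ((a - a₀) ^ 2 * c ^ 2) + b * ((a - a₀) ^ 2 * s ^ 2) := by
        linear_combination (b * (a - a₀) ^ 2) * hsq
    _ ≤ b * (a₀ - a * c) ^ 2 + b * (b ^ 2 * s ^ 2) :=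
        add_le_add (mul_le_mul_of_nonneg_left h3 hb.le) (mul_le_mul_of_nonneg_left h4 hb.le)
    _ = b * ((a₀ - a * c) ^ 2 + b ^ 2 * s ^ 2) := by ring
end

section
/- Let a₀, a_I, b_I be real numbers with 0 < a_I < a₀ and b_I > 0, and let t > 0. Then (1/(2πi)) · ∫_{−∞}^{∞} e^{t·z(ξ)} · z'(ξ)/z(ξ) dξ = 1, where z(ξ) = a₀ − a_I·cosh ξ + i·b_I·sinh ξ and z'(ξ) = −a_I·sinh ξ + i·b_I·cosh ξ; in particular z(ξ) ≠ 0 for all ξ and the integral converges absolutely. -/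
open MeasureTheory

/-- The hyperbolic contour `z(ξ) = a₀ − a_I cosh ξ + i b_I sinh ξ`. -/
noncomputable def zContour (a₀ aI bI ξ : ℝ) : ℂ :=
  (a₀ : ℂ) - (aI : ℂ) * Complex.cosh (ξ : ℂ) + Complex.I * (bI : ℂ) * Complex.sinh (ξ : ℂ)

/-- Its derivative `z'(ξ) = −a_I sinh ξ + i b_I cosh ξ`. -/
noncomputable def zContour' (aI bI ξ : ℝ) : ℂ :=
  -(aI : ℂ) * Complex.sinh (ξ : ℂ) + Complex.I * (bI : ℂ) * Complex.cosh (ξ : ℂ)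

open Set Filter Complex intervalIntegral
open scoped Topology

noncomputable def Gein (t : ℝ) (w : ℂ) : ℂ :=
  ∫ u in Set.Ioo (0:ℝ) 1, (Complex.exp ((t:ℂ) * w * (u:ℂ)) - 1) / (u:ℂ)

lemma norm_exp_sub_one_le' (z : ℂ) : ‖Complex.exp z - 1‖ ≤ ‖z‖ * Real.exp ‖z‖ := by
  have h : ∀ u ∈ Set.Icc (0:ℝ) 1, HasDerivWithinAt (fun u : ℝ => Complex.exp ((u:ℂ) * z))
      (z * Complex.exp ((u:ℂ) * z)) (Set.Icc 0 1) u := by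
    intro u _
    have h1 : HasDerivAt (fun c : ℂ => Complex.exp (c * z)) (z * Complex.exp ((u:ℂ) * z)) (u:ℂ) := by
      have := (Complex.hasDerivAt_exp ((u:ℂ) * z)).comp (u:ℂ)
        ((hasDerivAt_id (u:ℂ)).mul_const z)
      simpa [mul_comm, Function.comp_def] using this
    exact (h1.comp_ofReal).hasDerivWithinAt
  have hb : ∀ u ∈ Set.Icc (0:ℝ) 1, ‖z * Complex.exp ((u:ℂ) * z)‖ ≤ ‖z‖ * Real.exp ‖z‖ := by
    intro u hu
    rw [norm_mul, Complex.norm_exp]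
    have h1 : ((u:ℂ) * z).re ≤ ‖z‖ := by
      have : ((u:ℂ) * z).re = u * z.re := by simp
      rw [this]
      have h2 : |z.re| ≤ ‖z‖ := Complex.abs_re_le_norm z
      nlinarith [abs_nonneg z.re, le_abs_self z.re, hu.1, hu.2, norm_nonneg z]
    exact mul_le_mul_of_nonneg_left (Real.exp_le_exp.2 h1) (norm_nonneg z)
  have := (convex_Icc (0:ℝ) 1).norm_image_sub_le_of_norm_hasDerivWithin_le h hb
    (Set.left_mem_Icc.2 zero_le_one) (Set.right_mem_Icc.2 zero_le_one)
  simpa using this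

lemma Gein_integrand_norm_le (t : ℝ) (ht : 0 < t) (w : ℂ) {u : ℝ} (hu : u ∈ Set.Ioo (0:ℝ) 1) :
    ‖(Complex.exp ((t:ℂ) * w * (u:ℂ)) - 1) / (u:ℂ)‖ ≤ t * ‖w‖ * Real.exp (t * ‖w‖) := by
  have hu0 : (0:ℝ) < u := hu.1
  have hnorm : ‖(t:ℂ) * w * (u:ℂ)‖ = t * ‖w‖ * u := by
    simp [norm_mul, abs_of_pos ht, abs_of_pos hu0]
  have h1 := norm_exp_sub_one_le' ((t:ℂ) * w * (u:ℂ))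
  rw [hnorm] at h1
  rw [norm_div]
  have hc : ‖(u:ℂ)‖ = u := by simp [abs_of_pos hu0]
  rw [hc, div_le_iff₀ hu0]
  have hb1 : Real.exp (t * ‖w‖ * u) ≤ Real.exp (t * ‖w‖) := by
    apply Real.exp_le_exp.2
    nlinarith [mul_nonneg ht.le (norm_nonneg w), hu.2]
  calc ‖Complex.exp ((t:ℂ) * w * (u:ℂ)) - 1‖ ≤ t * ‖w‖ * u * Real.exp (t * ‖w‖ * u) := h1
    _ ≤ t * ‖w‖ * u * Real.exp (t * ‖w‖) := mul_le_mul_of_nonneg_left hb1 (by positivity)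
    _ = t * ‖w‖ * Real.exp (t * ‖w‖) * u := by ring

lemma Gein_hasDerivAt (t : ℝ) (ht : 0 < t) (w₀ : ℂ) (hw : w₀ ≠ 0) :
    HasDerivAt (Gein t) ((Complex.exp ((t:ℂ) * w₀) - 1) / w₀) w₀ := by
  have key : HasDerivAt (Gein t)
      (∫ u in Set.Ioo (0:ℝ) 1, (t:ℂ) * Complex.exp ((t:ℂ) * w₀ * (u:ℂ))) w₀ := by
    have main := _root_.hasDerivAt_integral_of_dominated_loc_of_deriv_le
      (F := fun (w : ℂ) (u : ℝ) => (Complex.exp ((t:ℂ) * w * (u:ℂ)) - 1) / (u:ℂ))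
      (F' := fun (w : ℂ) (u : ℝ) => (t:ℂ) * Complex.exp ((t:ℂ) * w * (u:ℂ)))
      (x₀ := w₀) (s := Metric.ball w₀ 1) (μ := volume.restrict (Set.Ioo (0:ℝ) 1))
      (bound := fun _ => t * Real.exp (t * (‖w₀‖ + 1)))
      (Metric.ball_mem_nhds w₀ one_pos) ?_ ?_ ?_ ?_ ?_ ?_
    · exact main.2
    · -- measurability of F x
      filter_upwards with x
      apply ContinuousOn.aestronglyMeasurable ?_ measurableSet_Ioo
      apply ContinuousOn.div
      · apply Continuous.continuousOn; fun_prop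
      · exact Complex.continuous_ofReal.continuousOn
      · intro u hu; exact_mod_cast ne_of_gt hu.1
    · -- integrability of F w₀
      apply Integrable.mono' (g := fun _ => t * ‖w₀‖ * Real.exp (t * ‖w₀‖))
      · exact integrable_const _
      · apply ContinuousOn.aestronglyMeasurable ?_ measurableSet_Ioo
        apply ContinuousOn.div
        · apply Continuous.continuousOn; fun_prop
        · exact Complex.continuous_ofReal.continuousOn
        · intro u hu; exact_mod_cast ne_of_gt hu.1
      · rw [ae_restrict_iff' measurableSet_Ioo]
        filter_upwards with u hu
        exact Gein_integrand_norm_le t ht w₀ hu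
    · -- measurability of F' w₀
      apply ContinuousOn.aestronglyMeasurable ?_ measurableSet_Ioo
      apply Continuous.continuousOn; fun_prop
    · -- bound
      rw [ae_restrict_iff' measurableSet_Ioo]
      filter_upwards with u hu
      intro x hx
      rw [norm_mul]
      have h1 : ‖Complex.exp ((t:ℂ) * x * (u:ℂ))‖ ≤ Real.exp (t * (‖w₀‖ + 1)) := by
        rw [Complex.norm_exp, Real.exp_le_exp]
        have hre : ((t:ℂ) * x * (u:ℂ)).re = t * x.re * u := by simp
        rw [hre]
        have hx1 : ‖x‖ < ‖w₀‖ + 1 := by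
          have h0 := mem_ball_iff_norm.1 hx
          have h2 := norm_sub_norm_le x w₀
          linarith
        have hxre : x.re ≤ ‖w₀‖ + 1 :=
          le_trans (le_trans (le_abs_self _) (Complex.abs_re_le_norm x)) hx1.le
        rcases le_or_gt x.re 0 with hr | hr
        · nlinarith [mul_nonneg (mul_nonneg ht.le (neg_nonneg.2 hr)) hu.1.le,
            mul_pos ht (show (0:ℝ) < ‖w₀‖ + 1 by positivity)]
        · nlinarith [mul_le_mul_of_nonneg_left hu.2.le (mul_pos ht hr).le,
            mul_le_mul_of_nonneg_left hxre ht.le]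
      have h2 : ‖(t:ℂ)‖ = t := by simp [abs_of_pos ht]
      rw [h2]
      exact mul_le_mul_of_nonneg_left h1 ht.le
    · exact integrable_const _
    · -- differentiability in w
      rw [ae_restrict_iff' measurableSet_Ioo]
      filter_upwards with u hu
      intro x _
      have hu0 : (u:ℂ) ≠ 0 := by exact_mod_cast ne_of_gt hu.1
      have h1 : HasDerivAt (fun w : ℂ => Complex.exp ((t:ℂ) * w * (u:ℂ)))
          (((t:ℂ) * (u:ℂ)) * Complex.exp ((t:ℂ) * x * (u:ℂ))) x := by
        have hinner : HasDerivAt (fun w : ℂ => (t:ℂ) * w * (u:ℂ)) ((t:ℂ) * (u:ℂ)) x := by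
          have he : (fun w : ℂ => (t:ℂ) * w * (u:ℂ)) = fun w : ℂ => ((t:ℂ) * (u:ℂ)) * w := by
            funext w; ring
          rw [he]
          simpa using (hasDerivAt_id x).const_mul ((t:ℂ) * (u:ℂ))
        have := (Complex.hasDerivAt_exp ((t:ℂ) * x * (u:ℂ))).comp x hinner
        simpa [mul_comm, Function.comp_def] using this
      have h2 := (h1.sub_const 1).div_const (u:ℂ)
      refine h2.congr_deriv ?_
      field_simp
  have hcomp : (∫ u in Set.Ioo (0:ℝ) 1, (t:ℂ) * Complex.exp ((t:ℂ) * w₀ * (u:ℂ)))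
      = (Complex.exp ((t:ℂ) * w₀) - 1) / w₀ := by
    rw [← MeasureTheory.integral_Ioc_eq_integral_Ioo,
      ← intervalIntegral.integral_of_le (zero_le_one (α := ℝ))]
    have htw : (t:ℂ) * w₀ ≠ 0 := by
      apply mul_ne_zero _ hw
      exact_mod_cast ne_of_gt ht
    have hassoc : ∀ u : ℝ, (t:ℂ) * Complex.exp ((t:ℂ) * w₀ * (u:ℂ))
        = (t:ℂ) * Complex.exp (((t:ℂ) * w₀) * (u:ℂ)) := fun u => rfl
    rw [intervalIntegral.integral_const_mul, integral_exp_mul_complex htw]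
    have htc : (t:ℂ) ≠ 0 := by exact_mod_cast ht.ne'
    simp only [Complex.ofReal_one, Complex.ofReal_zero, mul_one, mul_zero, Complex.exp_zero]
    field_simp
  rw [hcomp] at key
  exact key

lemma Gein_conj (t : ℝ) (w : ℂ) : Gein t ((starRingEnd ℂ) w) = (starRingEnd ℂ) (Gein t w) := by
  unfold Gein
  rw [← integral_conj]
  congr 1
  funext u
  rw [map_div₀, map_sub, map_one, ← Complex.exp_conj, map_mul, map_mul,
    Complex.conj_ofReal, Complex.conj_ofReal]

lemma zContour_eq (a₀ aI bI ξ : ℝ) :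
    zContour a₀ aI bI ξ = ((a₀ - aI * Real.cosh ξ : ℝ) : ℂ) + ((bI * Real.sinh ξ : ℝ) : ℂ) * Complex.I := by
  simp only [zContour, Complex.ofReal_sub, Complex.ofReal_mul, Complex.ofReal_cosh,
    Complex.ofReal_sinh]
  ring

lemma zContour_re (a₀ aI bI ξ : ℝ) : (zContour a₀ aI bI ξ).re = a₀ - aI * Real.cosh ξ := by
  rw [zContour_eq]
  simp only [Complex.add_re, Complex.ofReal_re, Complex.mul_re, Complex.I_re, Complex.I_im,
    Complex.ofReal_im]
  ring

lemma zContour_im (a₀ aI bI ξ : ℝ) : (zContour a₀ aI bI ξ).im = bI * Real.sinh ξ := by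
  rw [zContour_eq]
  simp only [Complex.add_im, Complex.ofReal_im, Complex.mul_im, Complex.I_im, Complex.I_re,
    Complex.ofReal_re]
  ring

lemma zContour_neg (a₀ aI bI ξ : ℝ) :
    zContour a₀ aI bI (-ξ) = (starRingEnd ℂ) (zContour a₀ aI bI ξ) := by
  rw [zContour_eq, zContour_eq]
  simp only [map_add, map_mul, Complex.conj_ofReal, Complex.conj_I, Real.cosh_neg, Real.sinh_neg]
  push_cast
  ring

lemma zContour_mem_slitPlane (a₀ aI bI : ℝ) (h1 : 0 < aI) (h2 : aI < a₀) (h3 : 0 < bI) (ξ : ℝ) :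
    zContour a₀ aI bI ξ ∈ Complex.slitPlane := by
  rw [Complex.mem_slitPlane_iff, zContour_re, zContour_im]

  rcases eq_or_ne ξ 0 with rfl | hξ
  · left; simp [Real.cosh_zero]; linarith
  · right
    have : Real.sinh ξ ≠ 0 := fun h => hξ (Real.sinh_injective (by simpa using h))
    exact mul_ne_zero h3.ne' this

lemma zContour_ne_zero (a₀ aI bI : ℝ) (h1 : 0 < aI) (h2 : aI < a₀) (h3 : 0 < bI) (ξ : ℝ) :
    zContour a₀ aI bI ξ ≠ 0 :=
  Complex.slitPlane_ne_zero (zContour_mem_slitPlane a₀ aI bI h1 h2 h3 ξ)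

lemma hasDerivAt_zContour (a₀ aI bI : ℝ) (ξ : ℝ) :
    HasDerivAt (fun ξ : ℝ => zContour a₀ aI bI ξ) (zContour' aI bI ξ) ξ := by
  have h1 : HasDerivAt (fun w : ℂ => (a₀:ℂ) - (aI:ℂ) * Complex.cosh w + Complex.I * (bI:ℂ) * Complex.sinh w)
      (-(aI:ℂ) * Complex.sinh (ξ:ℂ) + Complex.I * (bI:ℂ) * Complex.cosh (ξ:ℂ)) (ξ:ℂ) := by
    have hc := (Complex.hasDerivAt_cosh (ξ:ℂ)).const_mul ((aI:ℂ))
    have hs := (Complex.hasDerivAt_sinh (ξ:ℂ)).const_mul (Complex.I * (bI:ℂ))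
    have h := ((hasDerivAt_const (ξ:ℂ) ((a₀:ℂ))).sub hc).add hs
    exact h.congr_deriv (by ring)
  exact h1.comp_ofReal

noncomputable def Kfun (t : ℝ) (ζ : ℂ) : ℂ := Gein t (-ζ / (t:ℂ)) + Complex.log ζ

lemma Kfun_hasDerivAt (t : ℝ) (ht : 0 < t) {ζ : ℂ} (hζ : 0 < ζ.re) :
    HasDerivAt (Kfun t) (Complex.exp (-ζ) / ζ) ζ := by
  have htc : (t:ℂ) ≠ 0 := by exact_mod_cast ht.ne'
  have hzne : ζ ≠ 0 := fun h => by simp [h] at hζ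
  have hw : -ζ / (t:ℂ) ≠ 0 := div_ne_zero (neg_ne_zero.2 hzne) htc
  have hG := Gein_hasDerivAt t ht (-ζ / (t:ℂ)) hw
  have hinner : HasDerivAt (fun ζ : ℂ => -ζ / (t:ℂ)) (-(1 / (t:ℂ))) ζ := by
    have := ((hasDerivAt_id ζ).neg).div_const ((t:ℂ))
    simpa [neg_div] using this
  have hGc := hG.comp ζ hinner
  have hlog := Complex.hasDerivAt_log (Complex.mem_slitPlane_iff.2 (Or.inl hζ))
  have h := hGc.add hlog
  have hsimp : (t:ℂ) * (-ζ / (t:ℂ)) = -ζ := by field_simp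
  rw [hsimp] at h
  refine h.congr_deriv ?_
  field_simp
  ring

noncomputable def Lconst (t : ℝ) : ℂ :=
  Kfun t 1 + ∫ x in Set.Ioi (1:ℝ), Complex.exp (-(x:ℂ)) / (x:ℂ)

lemma expInt_integrableOn : IntegrableOn (fun x : ℝ => Complex.exp (-(x:ℂ)) / (x:ℂ)) (Set.Ioi 1) := by
  apply Integrable.mono' (g := fun x => Real.exp (-x))
  · have := exp_neg_integrableOn_Ioi 1 (zero_lt_one (α := ℝ))
    simpa [IntegrableOn] using this
  · apply ContinuousOn.aestronglyMeasurable ?_ measurableSet_Ioi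
    apply ContinuousOn.div
    · apply Continuous.continuousOn; fun_prop
    · exact Complex.continuous_ofReal.continuousOn
    · intro x hx
      exact_mod_cast ne_of_gt (lt_trans zero_lt_one hx)
  · rw [ae_restrict_iff' measurableSet_Ioi]
    filter_upwards with x hx
    have hx1 : (1:ℝ) < x := hx
    rw [norm_div]
    have h1 : ‖Complex.exp (-(x:ℂ))‖ = Real.exp (-x) := by
      rw [Complex.norm_exp]
      norm_num
    have h2 : ‖(x:ℂ)‖ = x := by simp [abs_of_pos (lt_trans zero_lt_one hx1)]
    rw [h1, h2, div_le_iff₀ (lt_trans zero_lt_one hx1)]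
    nlinarith [Real.exp_pos (-x)]

lemma Kreal_hasDerivAt (t : ℝ) (ht : 0 < t) {x : ℝ} (hx : 0 < x) :
    HasDerivAt (fun x : ℝ => Kfun t (x:ℂ)) (Complex.exp (-(x:ℂ)) / (x:ℂ)) x := by
  have h := Kfun_hasDerivAt t ht (ζ := (x:ℂ)) (by simpa using hx)
  exact h.comp_ofReal

lemma Kfun_real_sub_L (t : ℝ) (ht : 0 < t) {X : ℝ} (hX : 1 ≤ X) :
    ‖Kfun t (X:ℂ) - Lconst t‖ ≤ Real.exp (-X) := by
  have hcont : ContinuousOn (fun x : ℝ => Complex.exp (-(x:ℂ)) / (x:ℂ)) (Set.Icc 1 X) := by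
    apply ContinuousOn.div
    · apply Continuous.continuousOn; fun_prop
    · exact Complex.continuous_ofReal.continuousOn
    · intro x hx
      exact_mod_cast ne_of_gt (lt_of_lt_of_le zero_lt_one hx.1)
  have hftc : ∫ x in (1:ℝ)..X, Complex.exp (-(x:ℂ)) / (x:ℂ) = Kfun t (X:ℂ) - Kfun t 1 := by
    have : Kfun t ((1:ℝ):ℂ) = Kfun t 1 := by norm_num
    rw [← this]
    apply intervalIntegral.integral_eq_sub_of_hasDerivAt
    · intro x hx
      rw [Set.uIcc_of_le hX] at hx
      exact Kreal_hasDerivAt t ht (lt_of_lt_of_le zero_lt_one hx.1)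
    · apply ContinuousOn.intervalIntegrable
      rwa [Set.uIcc_of_le hX]
  have hsplit : (∫ x in Set.Ioi (1:ℝ), Complex.exp (-(x:ℂ)) / (x:ℂ))
      = (∫ x in (1:ℝ)..X, Complex.exp (-(x:ℂ)) / (x:ℂ))
        + ∫ x in Set.Ioi X, Complex.exp (-(x:ℂ)) / (x:ℂ) := by
    rw [intervalIntegral.integral_of_le hX]
    rw [← MeasureTheory.setIntegral_union (Set.Ioc_disjoint_Ioi le_rfl) measurableSet_Ioi
      (expInt_integrableOn.mono_set (Set.Ioc_subset_Ioi_self)) (expInt_integrableOn.mono_set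
        (Set.Ioi_subset_Ioi hX))]
    rw [Set.Ioc_union_Ioi_eq_Ioi hX]
  have hKL : Kfun t (X:ℂ) - Lconst t = -∫ x in Set.Ioi X, Complex.exp (-(x:ℂ)) / (x:ℂ) := by
    rw [Lconst, hsplit, hftc]
    ring
  rw [hKL, norm_neg]
  have hb : ‖∫ x in Set.Ioi X, Complex.exp (-(x:ℂ)) / (x:ℂ)‖ ≤ ∫ x in Set.Ioi X, Real.exp (-x) := by
    apply MeasureTheory.norm_integral_le_of_norm_le
    · have := exp_neg_integrableOn_Ioi X (zero_lt_one (α := ℝ))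
      simpa [IntegrableOn] using this
    · rw [ae_restrict_iff' measurableSet_Ioi]
      filter_upwards with x hx
      have hx1 : (1:ℝ) < x := lt_of_le_of_lt hX hx
      rw [norm_div]
      have h1 : ‖Complex.exp (-(x:ℂ))‖ = Real.exp (-x) := by
        rw [Complex.norm_exp]; norm_num
      have h2 : ‖(x:ℂ)‖ = x := by simp [abs_of_pos (lt_trans zero_lt_one hx1)]
      rw [h1, h2, div_le_iff₀ (lt_trans zero_lt_one hx1)]
      nlinarith [Real.exp_pos (-x)]
  rw [integral_exp_neg_Ioi X] at hb
  exact hb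

lemma Kfun_vert (t : ℝ) (ht : 0 < t) {x y : ℝ} (hx : 1 ≤ x) :
    ‖Kfun t ((x:ℂ) + (y:ℂ) * Complex.I) - Kfun t (x:ℂ)‖ ≤ |y| * Real.exp (-x) := by
  have hne : ∀ u : ℝ, ((x:ℂ) + (u:ℂ) * Complex.I) ≠ 0 := by
    intro u h
    have : ((x:ℂ) + (u:ℂ) * Complex.I).re = x := by simp
    rw [h] at this
    simp at this
    linarith
  have hre : ∀ u : ℝ, ((x:ℂ) + (u:ℂ) * Complex.I).re = x := by intro u; simp
  have hd : ∀ u : ℝ, HasDerivAt (fun u : ℝ => Kfun t ((x:ℂ) + (u:ℂ) * Complex.I))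
      (Complex.I * (Complex.exp (-((x:ℂ) + (u:ℂ) * Complex.I)) / ((x:ℂ) + (u:ℂ) * Complex.I))) u := by
    intro u
    have hin : HasDerivAt (fun u : ℝ => (x:ℂ) + (u:ℂ) * Complex.I) Complex.I u := by
      have h0 : HasDerivAt (fun u : ℝ => ((u:ℝ):ℂ)) 1 u := by
        simpa using HasDerivAt.ofReal_comp (hasDerivAt_id u)
      have h1 := (h0.mul_const Complex.I).const_add ((x:ℂ))
      simpa using h1
    have hK := Kfun_hasDerivAt t ht (ζ := (x:ℂ) + (u:ℂ) * Complex.I) (by rw [hre]; linarith)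
    have := HasDerivAt.scomp u hK hin
    simpa [smul_eq_mul, Function.comp_def] using this
  have hcont : Continuous (fun u : ℝ =>
      Complex.I * (Complex.exp (-((x:ℂ) + (u:ℂ) * Complex.I)) / ((x:ℂ) + (u:ℂ) * Complex.I))) := by
    apply continuous_const.mul
    apply Continuous.div
    · fun_prop
    · fun_prop
    · exact hne
  have hftc : ∫ u in (0:ℝ)..y,
      Complex.I * (Complex.exp (-((x:ℂ) + (u:ℂ) * Complex.I)) / ((x:ℂ) + (u:ℂ) * Complex.I))
      = Kfun t ((x:ℂ) + (y:ℂ) * Complex.I) - Kfun t (x:ℂ) := by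
    have h0 : Kfun t ((x:ℂ) + ((0:ℝ):ℂ) * Complex.I) = Kfun t (x:ℂ) := by norm_num
    rw [← h0]
    apply intervalIntegral.integral_eq_sub_of_hasDerivAt (fun u _ => hd u)
    exact hcont.intervalIntegrable 0 y
  rw [← hftc]
  have hb := intervalIntegral.norm_integral_le_of_norm_le_const
    (C := Real.exp (-x)) (f := fun u : ℝ =>
      Complex.I * (Complex.exp (-((x:ℂ) + (u:ℂ) * Complex.I)) / ((x:ℂ) + (u:ℂ) * Complex.I)))
    (a := 0) (b := y) ?_
  · calc ‖∫ u in (0:ℝ)..y, Complex.I * (Complex.exp (-((x:ℂ) + (u:ℂ) * Complex.I)) /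
        ((x:ℂ) + (u:ℂ) * Complex.I))‖ ≤ Real.exp (-x) * |y - 0| := hb
    _ = |y| * Real.exp (-x) := by rw [sub_zero]; ring
  · intro u _
    rw [norm_mul]
    have hI : ‖Complex.I‖ = 1 := by simp
    rw [hI, one_mul, norm_div]
    have h1 : ‖Complex.exp (-((x:ℂ) + (u:ℂ) * Complex.I))‖ = Real.exp (-x) := by
      rw [Complex.norm_exp]
      congr 1
      simp
    have h2 : (1:ℝ) ≤ ‖(x:ℂ) + (u:ℂ) * Complex.I‖ := by
      calc (1:ℝ) ≤ x := hx
      _ = |((x:ℂ) + (u:ℂ) * Complex.I).re| := by rw [hre]; rw [abs_of_pos (by linarith)]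
      _ ≤ ‖(x:ℂ) + (u:ℂ) * Complex.I‖ := Complex.abs_re_le_norm _
    rw [h1, div_le_iff₀ (lt_of_lt_of_le zero_lt_one h2)]
    nlinarith [Real.exp_pos (-x)]

lemma Kfun_est (t : ℝ) (ht : 0 < t) {ζ : ℂ} (hζ : 1 ≤ ζ.re) :
    ‖Kfun t ζ - Lconst t‖ ≤ (1 + |ζ.im|) * Real.exp (-ζ.re) := by
  have hζeq : ζ = (ζ.re : ℂ) + (ζ.im : ℂ) * Complex.I := (Complex.re_add_im ζ).symm
  calc ‖Kfun t ζ - Lconst t‖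
      ≤ ‖Kfun t ζ - Kfun t (ζ.re:ℂ)‖ + ‖Kfun t (ζ.re:ℂ) - Lconst t‖ := by
        have := norm_sub_le (Kfun t ζ - Kfun t (ζ.re:ℂ)) (Lconst t - Kfun t (ζ.re:ℂ))
        calc ‖Kfun t ζ - Lconst t‖
            = ‖(Kfun t ζ - Kfun t (ζ.re:ℂ)) - (Lconst t - Kfun t (ζ.re:ℂ))‖ := by ring_nf
          _ ≤ _ := by
              refine (norm_sub_le _ _).trans ?_
              rw [norm_sub_rev (Lconst t) _]
    _ ≤ |ζ.im| * Real.exp (-ζ.re) + Real.exp (-ζ.re) := by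
        apply add_le_add
        · have := Kfun_vert t ht (x := ζ.re) (y := ζ.im) hζ
          rw [← hζeq] at this
          exact this
        · exact Kfun_real_sub_L t ht hζ
    _ = (1 + |ζ.im|) * Real.exp (-ζ.re) := by ring

lemma Kfun_real_conj (t : ℝ) (ht : 0 < t) {x : ℝ} (hx : 0 < x) :
    (starRingEnd ℂ) (Kfun t (x:ℂ)) = Kfun t (x:ℂ) := by
  unfold Kfun
  rw [map_add]
  have h1 : (starRingEnd ℂ) (Gein t (-(x:ℂ) / (t:ℂ))) = Gein t (-(x:ℂ) / (t:ℂ)) := by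
    rw [← Gein_conj]
    congr 1
    rw [map_div₀, map_neg, Complex.conj_ofReal, Complex.conj_ofReal]
  have h2 : (starRingEnd ℂ) (Complex.log (x:ℂ)) = Complex.log (x:ℂ) := by
    rw [← Complex.ofReal_log hx.le, Complex.conj_ofReal]
  rw [h1, h2]

lemma Lconst_conj (t : ℝ) (ht : 0 < t) : (starRingEnd ℂ) (Lconst t) = Lconst t := by
  unfold Lconst
  rw [map_add]
  have h1 : (starRingEnd ℂ) (Kfun t 1) = Kfun t 1 := by
    have := Kfun_real_conj t ht (x := 1) zero_lt_one
    simpa using this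
  rw [h1, ← integral_conj]
  congr 1
  refine MeasureTheory.integral_congr_ae (Filter.Eventually.of_forall fun x => ?_)
  simp only [map_div₀, ← Complex.exp_conj, map_neg, Complex.conj_ofReal]

lemma zContour'_eq (aI bI ξ : ℝ) :
    zContour' aI bI ξ = ((-aI * Real.sinh ξ : ℝ) : ℂ) + ((bI * Real.cosh ξ : ℝ) : ℂ) * Complex.I := by
  simp only [zContour', Complex.ofReal_mul, Complex.ofReal_neg, Complex.ofReal_cosh,
    Complex.ofReal_sinh]
  ring

lemma abs_sinh_le_cosh (x : ℝ) : |Real.sinh x| ≤ Real.cosh x := by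
  rw [abs_le]
  constructor
  · have := Real.cosh_add_sinh x
    nlinarith [Real.exp_pos x]
  · have := Real.cosh_sub_sinh x
    nlinarith [Real.exp_pos (-x)]

lemma H_hasDerivAt (a₀ aI bI t : ℝ) (h1 : 0 < aI) (h2 : aI < a₀) (h3 : 0 < bI) (ht : 0 < t)
    (ξ : ℝ) :
    HasDerivAt (fun ξ : ℝ => Gein t (zContour a₀ aI bI ξ) + Complex.log (zContour a₀ aI bI ξ))
      (Complex.exp ((t:ℂ) * zContour a₀ aI bI ξ) * zContour' aI bI ξ / zContour a₀ aI bI ξ) ξ := by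
  have hz := hasDerivAt_zContour a₀ aI bI ξ
  have hne := zContour_ne_zero a₀ aI bI h1 h2 h3 ξ
  have hG := Gein_hasDerivAt t ht _ hne
  have hL := Complex.hasDerivAt_log (zContour_mem_slitPlane a₀ aI bI h1 h2 h3 ξ)
  have hGc : HasDerivAt (fun ξ : ℝ => Gein t (zContour a₀ aI bI ξ))
      (zContour' aI bI ξ • ((Complex.exp ((t:ℂ) * zContour a₀ aI bI ξ) - 1) / zContour a₀ aI bI ξ)) ξ :=
    HasDerivAt.scomp ξ hG hz
  have hLc : HasDerivAt (fun ξ : ℝ => Complex.log (zContour a₀ aI bI ξ))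
      (zContour' aI bI ξ • (zContour a₀ aI bI ξ)⁻¹) ξ :=
    HasDerivAt.scomp ξ hL hz
  have h := hGc.add hLc
  refine h.congr_deriv ?_
  simp only [smul_eq_mul]
  field_simp
  ring

lemma log_identity (t : ℝ) (ht : 0 < t) {z : ℂ} (hz : 0 < z.im) :
    Complex.log z = Complex.log (-(t:ℂ) * z) - ((Real.log t : ℝ) : ℂ) + (Real.pi : ℂ) * Complex.I := by
  have hzne : z ≠ 0 := fun h => by simp [h] at hz
  have habs : ‖-(t:ℂ) * z‖ = t * ‖z‖ := by
    rw [norm_mul, norm_neg]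
    simp [abs_of_pos ht]
  have harg : Complex.arg (-(t:ℂ) * z) = Complex.arg z - Real.pi := by
    have h1 : -(t:ℂ) * z = ((t:ℝ):ℂ) * (-z) := by ring
    rw [h1, Complex.arg_real_mul (-z) ht, Complex.arg_neg_eq_arg_sub_pi_of_im_pos hz]
  apply Complex.ext
  · simp only [Complex.log_re, Complex.add_re, Complex.sub_re, Complex.ofReal_re,
      Complex.mul_re, Complex.I_re, Complex.I_im, Complex.ofReal_im]
    rw [habs, Real.log_mul ht.ne' (norm_ne_zero_iff.2 hzne)]
    ring
  · simp only [Complex.log_im, Complex.add_im, Complex.sub_im, Complex.ofReal_im,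
      Complex.mul_im, Complex.I_im, Complex.I_re, Complex.ofReal_re]
    rw [harg]
    ring

lemma H_eq_K (a₀ aI bI t : ℝ) (ht : 0 < t) {ξ : ℝ} (him : 0 < (zContour a₀ aI bI ξ).im) :
    Gein t (zContour a₀ aI bI ξ) + Complex.log (zContour a₀ aI bI ξ)
      = Kfun t (-(t:ℂ) * zContour a₀ aI bI ξ) - ((Real.log t : ℝ) : ℂ)
        + (Real.pi : ℂ) * Complex.I := by
  have htc : (t:ℂ) ≠ 0 := by exact_mod_cast ht.ne'
  have harg : -(-(t:ℂ) * zContour a₀ aI bI ξ) / (t:ℂ) = zContour a₀ aI bI ξ := by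
    field_simp
  rw [log_identity t ht him, Kfun, harg]
  ring

lemma tendsto_cosh_atTop : Tendsto Real.cosh atTop atTop := by
  apply tendsto_atTop_mono (fun x => ?_) ((Real.tendsto_exp_atTop).atTop_div_const two_pos)
  rw [Real.cosh_eq]
  have := Real.exp_pos (-x)
  linarith

lemma tendsto_K_comp (a₀ aI bI t : ℝ) (h1 : 0 < aI) (h2 : aI < a₀) (h3 : 0 < bI) (ht : 0 < t) :
    Tendsto (fun ξ : ℝ => Kfun t (-(t:ℂ) * zContour a₀ aI bI ξ)) atTop (𝓝 (Lconst t)) := by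
  have hc : 0 < t * aI := mul_pos ht h1
  have hre : ∀ ξ : ℝ, (-(t:ℂ) * zContour a₀ aI bI ξ).re = t * (aI * Real.cosh ξ - a₀) := by
    intro ξ
    have : (-(t:ℂ) * zContour a₀ aI bI ξ).re = -t * (zContour a₀ aI bI ξ).re := by
      simp [Complex.mul_re]
    rw [this, zContour_re]; ring
  have him : ∀ ξ : ℝ, (-(t:ℂ) * zContour a₀ aI bI ξ).im = -t * (bI * Real.sinh ξ) := by
    intro ξ
    have : (-(t:ℂ) * zContour a₀ aI bI ξ).im = -t * (zContour a₀ aI bI ξ).im := by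
      simp [Complex.mul_im]
    rw [this, zContour_im]
  -- limit of the bounding function
  have htopm : Tendsto (fun u : ℝ => t * aI * u) atTop atTop :=
    (tendsto_const_mul_atTop_of_pos hc).2 tendsto_id
  have hA : Tendsto (fun u : ℝ => Real.exp (-(t * aI * u))) atTop (𝓝 0) := by
    exact Real.tendsto_exp_neg_atTop_nhds_zero.comp htopm
  have hB : Tendsto (fun u : ℝ => u * Real.exp (-(t * aI * u))) atTop (𝓝 0) := by
    have h0 : Tendsto (fun y : ℝ => (1/(t*aI)) * (y ^ 1 * Real.exp (-y))) atTop (𝓝 0) := by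
      simpa using (Real.tendsto_pow_mul_exp_neg_atTop_nhds_zero 1).const_mul (1/(t*aI))
    have h1' := h0.comp htopm
    refine h1'.congr fun u => ?_
    simp only [Function.comp, pow_one]
    field_simp
  have hg : Tendsto (fun u : ℝ => (1 + t * bI * u) * (Real.exp (t * a₀) * Real.exp (-(t * aI * u))))
      atTop (𝓝 0) := by
    have hsum := (hA.const_mul (Real.exp (t * a₀))).add
      (hB.const_mul (t * bI * Real.exp (t * a₀)))
    rw [mul_zero, mul_zero, add_zero] at hsum
    exact hsum.congr fun u => by ring
  have hgc := hg.comp tendsto_cosh_atTop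
  -- squeeze
  have hev : ∀ᶠ ξ : ℝ in atTop, ‖Kfun t (-(t:ℂ) * zContour a₀ aI bI ξ) - Lconst t‖
      ≤ (1 + t * bI * Real.cosh ξ) * (Real.exp (t * a₀) * Real.exp (-(t * aI * Real.cosh ξ))) := by
    have hev1 : ∀ᶠ ξ : ℝ in atTop, (a₀ + 1/t) / aI ≤ Real.cosh ξ :=
      tendsto_cosh_atTop.eventually_ge_atTop _
    filter_upwards [hev1, eventually_ge_atTop (0:ℝ)] with ξ hξ hξ0
    have hre1 : 1 ≤ (-(t:ℂ) * zContour a₀ aI bI ξ).re := by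
      rw [hre]
      have : (a₀ + 1/t) ≤ aI * Real.cosh ξ := by
        rw [div_le_iff₀ h1] at hξ
        linarith [hξ]
      calc (1:ℝ) = t * (1/t) := by field_simp
      _ ≤ t * (aI * Real.cosh ξ - a₀) := by
          apply mul_le_mul_of_nonneg_left _ ht.le
          linarith
    have hest := Kfun_est t ht hre1
    apply hest.trans
    rw [hre, him]
    have habs : |(-t * (bI * Real.sinh ξ))| = t * bI * Real.sinh ξ := by
      have hs : 0 ≤ Real.sinh ξ := by
        rcases eq_or_lt_of_le hξ0 with h | h
        · simp [← h]
        · exact (Real.sinh_pos_iff.2 h).le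
      rw [abs_of_nonpos]
      · ring
      · nlinarith [mul_nonneg (mul_nonneg ht.le h3.le) hs]
    rw [habs]
    have hsc : Real.sinh ξ ≤ Real.cosh ξ := by
      have := Real.cosh_sub_sinh ξ
      nlinarith [Real.exp_pos (-ξ)]
    have hE : Real.exp (-(t * (aI * Real.cosh ξ - a₀)))
        = Real.exp (t * a₀) * Real.exp (-(t * aI * Real.cosh ξ)) := by
      rw [← Real.exp_add]
      congr 1
      ring
    rw [hE]
    apply mul_le_mul_of_nonneg_right
    · have hsc2 := mul_le_mul_of_nonneg_left hsc (mul_nonneg ht.le h3.le)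
      nlinarith [hsc2]
    · positivity
  have hsq := squeeze_zero_norm' hev hgc
  have := hsq.add_const (Lconst t)
  simpa using this

lemma tendsto_H_atTop (a₀ aI bI t : ℝ) (h1 : 0 < aI) (h2 : aI < a₀) (h3 : 0 < bI) (ht : 0 < t) :
    Tendsto (fun ξ : ℝ => Gein t (zContour a₀ aI bI ξ) + Complex.log (zContour a₀ aI bI ξ))
      atTop (𝓝 (Lconst t - ((Real.log t : ℝ) : ℂ) + (Real.pi : ℂ) * Complex.I)) := by
  have hK := tendsto_K_comp a₀ aI bI t h1 h2 h3 ht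
  have hK' := (hK.sub_const ((Real.log t : ℝ) : ℂ)).add_const ((Real.pi : ℂ) * Complex.I)
  apply Tendsto.congr' _ hK'
  filter_upwards [eventually_gt_atTop (0:ℝ)] with ξ hξ
  have him : 0 < (zContour a₀ aI bI ξ).im := by
    rw [zContour_im]
    exact mul_pos h3 (Real.sinh_pos_iff.2 hξ)
  exact (H_eq_K a₀ aI bI t ht him).symm

lemma H_neg (a₀ aI bI t : ℝ) (h1 : 0 < aI) (h2 : aI < a₀) (h3 : 0 < bI) (ξ : ℝ) :
    Gein t (zContour a₀ aI bI (-ξ)) + Complex.log (zContour a₀ aI bI (-ξ))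
      = (starRingEnd ℂ) (Gein t (zContour a₀ aI bI ξ) + Complex.log (zContour a₀ aI bI ξ)) := by
  rw [map_add, zContour_neg, Gein_conj, ← Complex.log_conj]
  exact Complex.slitPlane_arg_ne_pi (zContour_mem_slitPlane a₀ aI bI h1 h2 h3 ξ)

lemma tendsto_H_atBot (a₀ aI bI t : ℝ) (h1 : 0 < aI) (h2 : aI < a₀) (h3 : 0 < bI) (ht : 0 < t) :
    Tendsto (fun ξ : ℝ => Gein t (zContour a₀ aI bI ξ) + Complex.log (zContour a₀ aI bI ξ))
      atBot (𝓝 ((starRingEnd ℂ)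
        (Lconst t - ((Real.log t : ℝ) : ℂ) + (Real.pi : ℂ) * Complex.I))) := by
  have h0 := (tendsto_H_atTop a₀ aI bI t h1 h2 h3 ht).comp tendsto_neg_atBot_atTop
  have h1' := ((Complex.continuous_conj.tendsto _).comp h0)
  apply h1'.congr
  intro ξ
  simp only [Function.comp]
  rw [← H_neg a₀ aI bI t h1 h2 h3 (-ξ)]
  norm_num

lemma cosh_quadratic_lower (ξ : ℝ) : 1/2 + ξ^2/4 ≤ Real.cosh ξ := by
  have h1 := Real.quadratic_le_exp_of_nonneg (abs_nonneg ξ)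
  have h2 : Real.cosh |ξ| = Real.cosh ξ := Real.cosh_abs ξ
  have h3 := Real.cosh_eq |ξ|
  have h4 := Real.exp_pos (-|ξ|)
  have h5 : |ξ|^2 = ξ^2 := sq_abs ξ
  nlinarith [abs_nonneg ξ]

lemma integrable_integrand (a₀ aI bI t : ℝ) (h1 : 0 < aI) (h2 : aI < a₀) (h3 : 0 < bI)
    (ht : 0 < t) :
    Integrable (fun ξ : ℝ =>
      Complex.exp ((t : ℂ) * zContour a₀ aI bI ξ) * zContour' aI bI ξ / zContour a₀ aI bI ξ) := by
  set c := t * aI with hcdef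
  have hc : 0 < c := mul_pos ht h1
  set c₁ := (a₀ + aI) / (2 * aI) with hc₁def
  have hc₁ : 1 < c₁ := by
    rw [hc₁def, lt_div_iff₀ (by linarith)]
    linarith
  set m := min ((a₀ - aI)/2) (bI * Real.sqrt (c₁^2 - 1)) with hmdef
  have hm : 0 < m := by
    apply lt_min
    · linarith
    · apply mul_pos h3
      apply Real.sqrt_pos.2
      nlinarith
  have hzlow : ∀ ξ : ℝ, m ≤ ‖zContour a₀ aI bI ξ‖ := by
    intro ξ
    rcases le_or_gt (Real.cosh ξ) c₁ with hca | hca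
    · refine le_trans (min_le_left _ _) ?_
      have hre : (a₀ - aI)/2 ≤ (zContour a₀ aI bI ξ).re := by
        rw [zContour_re]
        have := mul_le_mul_of_nonneg_left hca h1.le
        rw [hc₁def] at this
        have heq : aI * ((a₀ + aI) / (2 * aI)) = (a₀ + aI)/2 := by
          field_simp
        rw [heq] at this
        linarith
      calc (a₀ - aI)/2 ≤ (zContour a₀ aI bI ξ).re := hre
      _ ≤ |(zContour a₀ aI bI ξ).re| := le_abs_self _
      _ ≤ ‖zContour a₀ aI bI ξ‖ := Complex.abs_re_le_norm _
    · refine le_trans (min_le_right _ _) ?_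
      have hsinh : Real.sqrt (c₁^2 - 1) ≤ |Real.sinh ξ| := by
        rw [← Real.sqrt_sq_eq_abs]
        apply Real.sqrt_le_sqrt
        have := Real.cosh_sq_sub_sinh_sq ξ
        nlinarith [hca.le, Real.cosh_pos ξ]
      calc bI * Real.sqrt (c₁^2 - 1) ≤ bI * |Real.sinh ξ| :=
            mul_le_mul_of_nonneg_left hsinh h3.le
      _ = |(zContour a₀ aI bI ξ).im| := by
            rw [zContour_im, abs_mul, abs_of_pos h3]
      _ ≤ ‖zContour a₀ aI bI ξ‖ := Complex.abs_im_le_norm _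
  have hcont : Continuous (fun ξ : ℝ =>
      Complex.exp ((t : ℂ) * zContour a₀ aI bI ξ) * zContour' aI bI ξ / zContour a₀ aI bI ξ) := by
    have hzc : Continuous (fun ξ : ℝ => zContour a₀ aI bI ξ) := by
      unfold zContour
      fun_prop
    have hz'c : Continuous (fun ξ : ℝ => zContour' aI bI ξ) := by
      unfold zContour'
      fun_prop
    apply Continuous.div
    · exact (Complex.continuous_exp.comp (continuous_const.mul hzc)).mul hz'c
    · exact hzc
    · exact fun ξ => zContour_ne_zero a₀ aI bI h1 h2 h3 ξ
  set A := Real.exp (t*a₀) * (aI + bI) / m * (2/c) with hAdef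
  apply Integrable.mono' (g := fun ξ : ℝ => A * Real.exp (-(c/8) * ξ^2))
  · exact (integrable_exp_neg_mul_sq (by positivity : (0:ℝ) < c/8)).const_mul A
  · exact hcont.aestronglyMeasurable
  · filter_upwards with ξ
    have hexp : ‖Complex.exp ((t : ℂ) * zContour a₀ aI bI ξ)‖
        = Real.exp (t*a₀) * Real.exp (-(c * Real.cosh ξ)) := by
      rw [Complex.norm_exp]
      rw [← Real.exp_add]
      congr 1
      have hre : ((t:ℂ) * zContour a₀ aI bI ξ).re = t * (zContour a₀ aI bI ξ).re := by
        simp [Complex.mul_re]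
      rw [hre, zContour_re, hcdef]
      ring
    have hz' : ‖zContour' aI bI ξ‖ ≤ (aI + bI) * Real.cosh ξ := by
      rw [zContour'_eq]
      refine le_trans (Complex.norm_le_abs_re_add_abs_im _) ?_
      have hre1 : (((-aI * Real.sinh ξ : ℝ):ℂ) + ((bI * Real.cosh ξ : ℝ):ℂ) * Complex.I).re
          = -aI * Real.sinh ξ := by
        simp only [Complex.add_re, Complex.ofReal_re, Complex.mul_re, Complex.I_re, Complex.I_im,
          Complex.ofReal_im]
        ring
      have him1 : (((-aI * Real.sinh ξ : ℝ):ℂ) + ((bI * Real.cosh ξ : ℝ):ℂ) * Complex.I).im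
          = bI * Real.cosh ξ := by
        simp only [Complex.add_im, Complex.ofReal_im, Complex.mul_im, Complex.I_im, Complex.I_re,
          Complex.ofReal_re]
        ring
      rw [hre1, him1]
      have hs := abs_sinh_le_cosh ξ
      have hcp := Real.cosh_pos ξ
      have h1' : |(-aI) * Real.sinh ξ| = aI * |Real.sinh ξ| := by
        rw [abs_mul, abs_neg, abs_of_pos h1]
      have h2' : |bI * Real.cosh ξ| = bI * Real.cosh ξ := by
        rw [abs_mul, abs_of_pos h3, abs_of_pos hcp]
      rw [neg_mul] at h1' ⊢
      rw [h1', h2']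
      nlinarith [mul_le_mul_of_nonneg_left hs h1.le]
    have key1 : Real.cosh ξ * Real.exp (-(c * Real.cosh ξ))
        ≤ (2/c) * Real.exp (-(c/2 * Real.cosh ξ)) := by
      have hcp := Real.cosh_pos ξ
      have hu : Real.cosh ξ ≤ (2/c) * Real.exp (c/2 * Real.cosh ξ) := by
        have hle : c/2 * Real.cosh ξ ≤ Real.exp (c/2 * Real.cosh ξ) := by
          linarith [Real.add_one_le_exp (c/2 * Real.cosh ξ)]
        have := mul_le_mul_of_nonneg_left hle (le_of_lt (by positivity : (0:ℝ) < 2/c))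
        calc Real.cosh ξ = (2/c) * (c/2 * Real.cosh ξ) := by field_simp
        _ ≤ (2/c) * Real.exp (c/2 * Real.cosh ξ) := this
      have := mul_le_mul_of_nonneg_right hu (Real.exp_pos (-(c * Real.cosh ξ))).le
      calc Real.cosh ξ * Real.exp (-(c * Real.cosh ξ))
          ≤ (2/c) * Real.exp (c/2 * Real.cosh ξ) * Real.exp (-(c * Real.cosh ξ)) := this
      _ = (2/c) * Real.exp (-(c/2 * Real.cosh ξ)) := by
          rw [mul_assoc, ← Real.exp_add]
          congr 2
          ring
    have key2 : Real.exp (-(c/2 * Real.cosh ξ)) ≤ Real.exp (-(c/8) * ξ^2) := by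
      apply Real.exp_le_exp.2
      have := cosh_quadratic_lower ξ
      nlinarith [hc]
    calc ‖Complex.exp ((t : ℂ) * zContour a₀ aI bI ξ) * zContour' aI bI ξ / zContour a₀ aI bI ξ‖
        = ‖Complex.exp ((t : ℂ) * zContour a₀ aI bI ξ)‖ * ‖zContour' aI bI ξ‖
          / ‖zContour a₀ aI bI ξ‖ := by
          rw [norm_div, norm_mul]
      _ ≤ (Real.exp (t*a₀) * Real.exp (-(c * Real.cosh ξ))) * ((aI + bI) * Real.cosh ξ) / m := by
          apply div_le_div₀ (by positivity) _ hm (hzlow ξ)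
          rw [hexp]
          exact mul_le_mul_of_nonneg_left hz' (by positivity)
      _ = (Real.exp (t*a₀) * (aI + bI) / m) * (Real.cosh ξ * Real.exp (-(c * Real.cosh ξ))) := by
          ring
      _ ≤ (Real.exp (t*a₀) * (aI + bI) / m) * ((2/c) * Real.exp (-(c/2 * Real.cosh ξ))) := by
          apply mul_le_mul_of_nonneg_left key1 (by positivity)
      _ ≤ (Real.exp (t*a₀) * (aI + bI) / m) * ((2/c) * Real.exp (-(c/8) * ξ^2)) := by
          apply mul_le_mul_of_nonneg_left _ (by positivity)
          exact mul_le_mul_of_nonneg_left key2 (by positivity)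
      _ = A * Real.exp (-(c/8) * ξ^2) := by rw [hAdef]; ring

/-- For `0 < a_I < a₀`, `b_I > 0` and `t > 0`, the residue identity
`(1/(2πi)) ∫ℝ e^{t z(ξ)} z'(ξ)/z(ξ) dξ = 1` holds along the hyperbolic contour;
in particular `z(ξ) ≠ 0` everywhere and the integral converges absolutely. -/
theorem residue_identity_hyperbolic_contour (a₀ aI bI t : ℝ)
    (h1 : 0 < aI) (h2 : aI < a₀) (h3 : 0 < bI) (ht : 0 < t) :
    (∀ ξ : ℝ, zContour a₀ aI bI ξ ≠ 0) ∧
    Integrable (fun ξ : ℝ =>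
      Complex.exp ((t : ℂ) * zContour a₀ aI bI ξ) * zContour' aI bI ξ / zContour a₀ aI bI ξ) ∧
    (1 / (2 * (Real.pi : ℂ) * Complex.I)) *
        ∫ ξ : ℝ, Complex.exp ((t : ℂ) * zContour a₀ aI bI ξ) * zContour' aI bI ξ /
          zContour a₀ aI bI ξ = 1 := by
  have hne := zContour_ne_zero a₀ aI bI h1 h2 h3
  have hInt := integrable_integrand a₀ aI bI t h1 h2 h3 ht
  refine ⟨hne, hInt, ?_⟩
  have hIoi := MeasureTheory.integral_Ioi_of_hasDerivAt_of_tendsto' (a := 0)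
    (f := fun ξ : ℝ => Gein t (zContour a₀ aI bI ξ) + Complex.log (zContour a₀ aI bI ξ))
    (f' := fun ξ : ℝ => Complex.exp ((t : ℂ) * zContour a₀ aI bI ξ) * zContour' aI bI ξ /
      zContour a₀ aI bI ξ)
    (fun x _ => H_hasDerivAt a₀ aI bI t h1 h2 h3 ht x) hInt.integrableOn
    (tendsto_H_atTop a₀ aI bI t h1 h2 h3 ht)
  have hIic := MeasureTheory.integral_Iic_of_hasDerivAt_of_tendsto' (a := 0)
    (f := fun ξ : ℝ => Gein t (zContour a₀ aI bI ξ) + Complex.log (zContour a₀ aI bI ξ))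
    (f' := fun ξ : ℝ => Complex.exp ((t : ℂ) * zContour a₀ aI bI ξ) * zContour' aI bI ξ /
      zContour a₀ aI bI ξ)
    (fun x _ => H_hasDerivAt a₀ aI bI t h1 h2 h3 ht x) hInt.integrableOn
    (tendsto_H_atBot a₀ aI bI t h1 h2 h3 ht)
  have htot := intervalIntegral.integral_Iic_add_Ioi (b := 0)
    (hInt.integrableOn) (hInt.integrableOn)
  rw [hIoi, hIic] at htot
  have hconj : (starRingEnd ℂ) (Lconst t - ((Real.log t : ℝ) : ℂ) + (Real.pi : ℂ) * Complex.I)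
      = Lconst t - ((Real.log t : ℝ) : ℂ) - (Real.pi : ℂ) * Complex.I := by
    rw [map_add, map_sub, Lconst_conj t ht, map_mul, Complex.conj_ofReal, Complex.conj_ofReal,
      Complex.conj_I]
    ring
  rw [hconj] at htot
  have hval : (∫ ξ : ℝ, Complex.exp ((t : ℂ) * zContour a₀ aI bI ξ) * zContour' aI bI ξ /
      zContour a₀ aI bI ξ) = 2 * (Real.pi : ℂ) * Complex.I := by
    rw [← htot]
    ring
  rw [hval]
  have hπ : ((Real.pi : ℝ) : ℂ) ≠ 0 := by exact_mod_cast Real.pi_ne_zero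
  have hI := Complex.I_ne_zero
  field_simp
end

section
/- Let X be a complex Banach space, A : X → X a bounded linear operator, α ∈ (0,2), M > 0, and let the contour parameters satisfy 0 < a_I < a₀ and b_I > 0. Assume that for every real ξ the operator z(ξ)^α·I + A is invertible in the algebra of bounded operators with ‖(z(ξ)^α·I + A)^{-1}‖ ≤ M/(1 + |z(ξ)|^α). Then for every t > 0 and every x ∈ X, both integrands below are Bochner integrable over ℝ and (1/(2πi)) ∫_{−∞}^{∞} e^{z(ξ)t} z'(ξ) z(ξ)^{α−1} (z(ξ)^α·I + A)^{-1} x dξ = x + (1/(2πi)) ∫_{−∞}^{∞} e^{z(ξ)t} z'(ξ) [ z(ξ)^{α−1} (z(ξ)^α·I + A)^{-1} x − z(ξ)^{-1} x ] dξ. -/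
open MeasureTheory

namespace CorrectedProp
open Complex Filter Set Topology

lemma norm_cexp_sub_one_le (w : ℂ) : ‖Complex.exp w - 1‖ ≤ ‖w‖ * Real.exp ‖w‖ := by
  have hD : ∀ τ : ℝ, HasDerivAt (fun τ : ℝ => Complex.exp (↑τ * w)) (w * Complex.exp (↑τ * w)) τ := by
    intro τ
    have h1 : HasDerivAt (fun τ : ℝ => (↑τ * w : ℂ)) w τ := by
      simpa using ((hasDerivAt_id (τ : ℂ)).mul_const w).comp_ofReal
    simpa [mul_comm] using h1.cexp
  have key : Complex.exp w - 1 = ∫ τ in (0:ℝ)..1, w * Complex.exp (↑τ * w) := by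
    rw [intervalIntegral.integral_eq_sub_of_hasDerivAt (fun τ _ => hD τ)
      (by apply Continuous.intervalIntegrable; continuity)]
    simp
  rw [key]
  have h := intervalIntegral.norm_integral_le_of_norm_le_const (a := (0:ℝ)) (b := 1)
    (C := ‖w‖ * Real.exp ‖w‖) (f := fun τ : ℝ => w * Complex.exp (↑τ * w)) ?_
  · simpa using h
  · intro τ hτ
    have hτ' : τ ∈ Set.Ioc (0:ℝ) 1 := by
      rwa [Set.uIoc_of_le (by norm_num : (0:ℝ) ≤ 1)] at hτ
    have h2 : ‖Complex.exp (↑τ * w)‖ ≤ Real.exp ‖w‖ := by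
      rw [Complex.norm_exp]
      apply Real.exp_le_exp.2
      have : (↑τ * w).re = τ * w.re := by simp
      rw [this]
      calc τ * w.re ≤ |τ * w.re| := le_abs_self _
        _ = |τ| * |w.re| := abs_mul _ _
        _ ≤ 1 * ‖w‖ := by
            apply mul_le_mul (by rw [_root_.abs_of_pos hτ'.1]; exact hτ'.2)
              (Complex.abs_re_le_norm w) (abs_nonneg _) one_pos.le
        _ = ‖w‖ := one_mul _
    calc ‖w * Complex.exp (↑τ * w)‖ = ‖w‖ * ‖Complex.exp (↑τ * w)‖ := norm_mul _ _
      _ ≤ ‖w‖ * Real.exp ‖w‖ := by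
          exact mul_le_mul_of_nonneg_left h2 (norm_nonneg _)

lemma abs_le_cosh (x : ℝ) : |x| ≤ Real.cosh x := by
  rcases abs_cases x with ⟨h, h0⟩ | ⟨h, h0⟩
  · rw [h]
    rcases eq_or_lt_of_le h0 with h1 | h1
    · simp [← h1]
    · exact le_trans (Real.self_le_sinh_iff.2 h0) (Real.sinh_lt_cosh x).le
  · rw [h, ← Real.cosh_neg]
    have h2 : 0 ≤ -x := by linarith
    exact le_trans (Real.self_le_sinh_iff.2 h2) (Real.sinh_lt_cosh (-x)).le

lemma tendsto_cosh_atTop : Tendsto Real.cosh atTop atTop :=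
  tendsto_atTop_mono (fun x => (le_abs_self x).trans (abs_le_cosh x)) tendsto_id

lemma self_le_exp_mul {c u : ℝ} (hc : 0 < c) (hu : 0 ≤ u) : u ≤ (1/c) * Real.exp (c * u) := by
  have h2 : c * u ≤ Real.exp (c * u) := by nlinarith [Real.add_one_le_exp (c*u)]
  rw [one_div, inv_mul_eq_div, le_div_iff₀ hc]
  linarith [h2]

lemma cosh_mul_exp_le {c : ℝ} (hc : 0 < c) (ξ : ℝ) :
    Real.cosh ξ * Real.exp (-(c * Real.cosh ξ)) ≤ (2 * (6/c)^3) * (1 + ξ^2)⁻¹ := by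
  set u := Real.cosh ξ with hu
  have h1 : 1 ≤ u := Real.one_le_cosh ξ
  have hξu : |ξ| ≤ u := abs_le_cosh ξ
  have hu0 : 0 < u := lt_of_lt_of_le one_pos h1
  have hsq : 1 + ξ^2 ≤ 2 * u^2 := by nlinarith [_root_.sq_abs ξ, abs_nonneg ξ, mul_self_le_mul_self (abs_nonneg ξ) hξu]
  have hpos : (0:ℝ) < 1 + ξ^2 := by positivity
  -- key: (1+ξ²) * (u * exp (-(c*u))) ≤ 2*(6/c)^3
  have hkey : (1 + ξ^2) * (u * Real.exp (-(c*u))) ≤ 2 * (6/c)^3 := by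
    have h3 : u ≤ (6/c) * Real.exp ((c/6) * u) := by
      have := self_le_exp_mul (show (0:ℝ) < c/6 by positivity) (le_of_lt hu0)
      calc u ≤ (1/(c/6)) * Real.exp ((c/6)*u) := this
        _ = (6/c) * Real.exp ((c/6)*u) := by rw [one_div_div]
    have h4 : u^3 ≤ (6/c)^3 * Real.exp ((c/2) * u) := by
      have h5 : u^3 ≤ ((6/c) * Real.exp ((c/6)*u))^3 :=
        pow_le_pow_left₀ (le_of_lt hu0) h3 3
      calc u^3 ≤ ((6/c) * Real.exp ((c/6)*u))^3 := h5
        _ = (6/c)^3 * Real.exp ((c/2) * u) := by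
            rw [mul_pow, ← Real.exp_nat_mul]
            ring_nf
    have h6 : (1 + ξ^2) * (u * Real.exp (-(c*u))) ≤ 2 * u^3 * Real.exp (-(c*u)) := by
      have he : (0:ℝ) < Real.exp (-(c*u)) := Real.exp_pos _
      nlinarith [_root_.sq_abs ξ, Real.exp_pos (-(c*u)), mul_pos hu0 he]
    calc (1 + ξ^2) * (u * Real.exp (-(c*u))) ≤ 2 * u^3 * Real.exp (-(c*u)) := h6
      _ ≤ 2 * ((6/c)^3 * Real.exp ((c/2)*u)) * Real.exp (-(c*u)) := by
          have he : (0:ℝ) < Real.exp (-(c*u)) := Real.exp_pos _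
          nlinarith [h4, Real.exp_pos (-(c*u))]
      _ = 2 * (6/c)^3 * Real.exp ((c/2)*u - c*u) := by
          rw [show (c/2)*u - c*u = (c/2)*u + (-(c*u)) by ring, Real.exp_add]; ring
      _ ≤ 2 * (6/c)^3 * 1 := by
          apply mul_le_mul_of_nonneg_left _ (by positivity)
          rw [Real.exp_le_one_iff]
          nlinarith
      _ = 2 * (6/c)^3 := mul_one _
  calc Real.cosh ξ * Real.exp (-(c * Real.cosh ξ)) = u * Real.exp (-(c*u)) := rfl
    _ = ((1 + ξ^2) * (u * Real.exp (-(c*u)))) * (1+ξ^2)⁻¹ := by field_simp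
    _ ≤ (2 * (6/c)^3) * (1+ξ^2)⁻¹ := by
        apply mul_le_mul_of_nonneg_right hkey (by positivity)

lemma integrable_cosh_exp {c : ℝ} (hc : 0 < c) :
    Integrable (fun ξ : ℝ => Real.cosh ξ * Real.exp (-(c * Real.cosh ξ))) := by
  apply Integrable.mono' (integrable_inv_one_add_sq.const_mul (2 * (6/c)^3))
  · apply Continuous.aestronglyMeasurable; continuity
  · refine ae_of_all _ fun ξ => ?_
    rw [Real.norm_eq_abs, _root_.abs_of_nonneg (by positivity)]
    exact cosh_mul_exp_le hc ξ

lemma tendsto_cosh_mul_exp {c : ℝ} (hc : 0 < c) :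
    Tendsto (fun R : ℝ => Real.cosh R * Real.exp (-(c * Real.cosh R))) atTop (𝓝 0) := by
  have h1 : Tendsto (fun u : ℝ => u * Real.exp (-u)) atTop (𝓝 0) := by
    simpa using Real.tendsto_pow_mul_exp_neg_atTop_nhds_zero 1
  have h2 : Tendsto (fun R : ℝ => c * Real.cosh R) atTop atTop :=
    (tendsto_cosh_atTop).const_mul_atTop hc
  have h3 : Tendsto (fun R : ℝ => (c * Real.cosh R) * Real.exp (-(c * Real.cosh R))) atTop (𝓝 0) :=
    h1.comp h2
  have h4 := h3.const_mul (1/c)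
  rw [mul_zero] at h4
  refine h4.congr fun R => ?_
  field_simp

/-- Entire primitive of `(1 - e^{-y})/y` (the function `Ein`). -/
noncomputable def myEin (y : ℂ) : ℂ :=
  ∫ s in Set.Ioc (0:ℝ) 1, (1 - Complex.exp (-(s:ℂ) * y)) / (s:ℂ)

lemma myEin_hasDerivAt {y₀ : ℂ} (hy : y₀ ≠ 0) :
    HasDerivAt myEin ((1 - Complex.exp (-y₀)) / y₀) y₀ := by
  have main : HasDerivAt (fun y => ∫ s in Set.Ioc (0:ℝ) 1, (1 - Complex.exp (-(s:ℂ) * y)) / (s:ℂ))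
      (∫ s in Set.Ioc (0:ℝ) 1, Complex.exp (-(s:ℂ) * y₀)) y₀ := by
    have hmeas : ∀ y : ℂ, AEStronglyMeasurable
        (fun s : ℝ => (1 - Complex.exp (-(s:ℂ) * y)) / (s:ℂ))
        (volume.restrict (Set.Ioc (0:ℝ) 1)) := by
      intro y
      apply Measurable.aestronglyMeasurable
      have m1 : Measurable fun s : ℝ => -(s:ℂ) * y :=
        (Complex.measurable_ofReal.neg).mul measurable_const
      exact (measurable_const.sub (Complex.measurable_exp.comp m1)).div Complex.measurable_ofReal
    have hF'meas : AEStronglyMeasurable (fun s : ℝ => Complex.exp (-(s:ℂ) * y₀))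
        (volume.restrict (Set.Ioc (0:ℝ) 1)) := by
      apply Continuous.aestronglyMeasurable; continuity
    have hbd : ∀ᵐ s : ℝ ∂(volume.restrict (Set.Ioc (0:ℝ) 1)),
        ∀ y ∈ Metric.ball y₀ 1, ‖Complex.exp (-(s:ℂ) * y)‖ ≤ Real.exp (‖y₀‖ + 1) := by
      refine (ae_restrict_iff' measurableSet_Ioc).2 (ae_of_all _ fun s hs y hy => ?_)
      rw [Complex.norm_exp]
      apply Real.exp_le_exp.2
      have h1 : (-(s:ℂ) * y).re = -(s * y.re) := by simp
      rw [h1]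
      have h2 : ‖y‖ ≤ ‖y₀‖ + 1 := by
        have := mem_ball_iff_norm.1 hy
        calc ‖y‖ = ‖y₀ + (y - y₀)‖ := by ring_nf
          _ ≤ ‖y₀‖ + ‖y - y₀‖ := norm_add_le _ _
          _ ≤ ‖y₀‖ + 1 := by linarith
      calc -(s * y.re) ≤ |s * y.re| := neg_le_abs _
        _ = |s| * |y.re| := abs_mul _ _
        _ ≤ 1 * ‖y‖ := mul_le_mul (by rw [_root_.abs_of_pos hs.1]; exact hs.2)
            (Complex.abs_re_le_norm y) (abs_nonneg _) one_pos.le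
        _ = ‖y‖ := one_mul _
        _ ≤ ‖y₀‖ + 1 := h2
    have hint : Integrable (fun s : ℝ => (1 - Complex.exp (-(s:ℂ) * y₀)) / (s:ℂ))
        (volume.restrict (Set.Ioc (0:ℝ) 1)) := by
      refine Integrable.mono' (g := fun _ : ℝ => ‖y₀‖ * Real.exp ‖y₀‖)
        ?_ (hmeas y₀) ?_
      · rw [← MeasureTheory.IntegrableOn]
        exact integrableOn_const (by simp)
      · refine (ae_restrict_iff' measurableSet_Ioc).2 (ae_of_all _ fun s hs => ?_)
        have hs0 : (0:ℝ) < s := hs.1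
        rw [norm_div]
        have hnorm : ‖(s:ℂ)‖ = s := by
          rw [Complex.norm_real, Real.norm_eq_abs, _root_.abs_of_pos hs0]
        rw [hnorm, div_le_iff₀ hs0]
        have h1 : ‖1 - Complex.exp (-(s:ℂ) * y₀)‖ = ‖Complex.exp (-(s:ℂ) * y₀) - 1‖ :=
          norm_sub_rev _ _
        rw [h1]
        have h2 : ‖-(s:ℂ) * y₀‖ = s * ‖y₀‖ := by
          rw [norm_mul, norm_neg, hnorm]
        calc ‖Complex.exp (-(s:ℂ) * y₀) - 1‖
            ≤ ‖-(s:ℂ) * y₀‖ * Real.exp ‖-(s:ℂ) * y₀‖ := norm_cexp_sub_one_le _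
          _ = s * ‖y₀‖ * Real.exp (s * ‖y₀‖) := by rw [h2]
          _ ≤ s * ‖y₀‖ * Real.exp ‖y₀‖ := by
              apply mul_le_mul_of_nonneg_left _ (by positivity)
              exact Real.exp_le_exp.2 (by nlinarith [norm_nonneg y₀, hs.2, hs0.le])
          _ = ‖y₀‖ * Real.exp ‖y₀‖ * s := by ring
    have hdiff : ∀ᵐ s : ℝ ∂(volume.restrict (Set.Ioc (0:ℝ) 1)),
        ∀ y ∈ Metric.ball y₀ 1, HasDerivAt (fun y => (1 - Complex.exp (-(s:ℂ) * y)) / (s:ℂ))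
          (Complex.exp (-(s:ℂ) * y)) y := by
      refine (ae_restrict_iff' measurableSet_Ioc).2 (ae_of_all _ fun s hs y _ => ?_)
      have hs0 : (s:ℂ) ≠ 0 := by
        simp only [ne_eq, Complex.ofReal_eq_zero]; exact hs.1.ne'
      have hinner : HasDerivAt (fun y : ℂ => -(s:ℂ) * y) (-(s:ℂ)) y := by
        simpa using (hasDerivAt_id y).const_mul (-(s:ℂ))
      have hexp := hinner.cexp
      have := ((hasDerivAt_const y (1:ℂ)).sub hexp).div_const (s:ℂ)
      refine this.congr_deriv ?_
      rw [zero_sub, mul_neg, neg_neg, mul_div_assoc, div_self hs0, mul_one]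
    have := hasDerivAt_integral_of_dominated_loc_of_deriv_le
      (F := fun y (s : ℝ) => (1 - Complex.exp (-(s:ℂ) * y)) / (s:ℂ))
      (F' := fun y (s : ℝ) => Complex.exp (-(s:ℂ) * y))
      (bound := fun _ : ℝ => Real.exp (‖y₀‖ + 1)) (Metric.ball_mem_nhds y₀ one_pos)
      (Filter.Eventually.of_forall hmeas) hint hF'meas hbd
      (by rw [← MeasureTheory.IntegrableOn]; exact integrableOn_const (by simp) (by simp)) hdiff
    exact this.2
  have heq : (∫ s in Set.Ioc (0:ℝ) 1, Complex.exp (-(s:ℂ) * y₀)) = (1 - Complex.exp (-y₀)) / y₀ := by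
    rw [← intervalIntegral.integral_of_le (by norm_num : (0:ℝ) ≤ 1)]
    have : ∀ s : ℝ, Complex.exp (-(s:ℂ) * y₀) = Complex.exp ((-y₀) * (s:ℂ)) := by
      intro s; ring_nf
    rw [intervalIntegral.integral_congr (fun s _ => this s)]
    rw [integral_exp_mul_complex (neg_ne_zero.2 hy)]
    simp only [Complex.ofReal_one, mul_one, Complex.ofReal_zero, mul_zero, Complex.exp_zero]
    rw [div_neg, ← neg_div, neg_sub]
  rw [← heq]
  exact main

lemma myEin_conj (y : ℂ) : myEin ((starRingEnd ℂ) y) = (starRingEnd ℂ) (myEin y) := by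
  unfold myEin
  rw [← integral_conj]
  congr 1
  funext s
  rw [map_div₀, map_sub, map_one, ← Complex.exp_conj]
  congr 2
  · rw [map_mul, map_neg, Complex.conj_ofReal]
  · exact (Complex.conj_ofReal s).symm

lemma myEin_real_im {r : ℝ} : (myEin (r:ℂ)).im = 0 := by
  have := myEin_conj (r:ℂ)
  rw [Complex.conj_ofReal] at this
  have h2 := Complex.conj_eq_iff_im.1 this.symm
  exact h2

lemma hasDerivAt_Psi {w : ℂ} (hw : w ∈ Complex.slitPlane) :
    HasDerivAt (fun u => myEin u - Complex.log u) (-Complex.exp (-w) / w) w := by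
  have hw0 : w ≠ 0 := Complex.slitPlane_ne_zero hw
  have h1 := (myEin_hasDerivAt hw0).fun_sub (Complex.hasDerivAt_log hw)
  refine h1.congr_deriv ?_
  simp only [div_eq_mul_inv]; ring

lemma psi_bound {y : ℂ} (hre : 0 < y.re) :
    ‖(myEin y - Complex.log y) - (myEin (y.re:ℂ) - Complex.log (y.re:ℂ))‖
      ≤ Real.exp (-y.re) / y.re * |y.im| := by
  set φ : ℝ → ℂ := fun τ => (y.re:ℂ) + (τ:ℂ) * Complex.I with hφ
  have hφre : ∀ τ, (φ τ).re = y.re := by intro τ; simp [hφ]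
  have hφslit : ∀ τ : ℝ, φ τ ∈ Complex.slitPlane := fun τ =>
    Complex.mem_slitPlane_iff.2 (Or.inl (by rw [hφre]; exact hre))
  have hφ0 : φ 0 = (y.re:ℂ) := by simp [hφ]
  have hφy : φ y.im = y := by rw [hφ]; exact Complex.re_add_im y
  have hφne : ∀ τ : ℝ, φ τ ≠ 0 := fun τ => Complex.slitPlane_ne_zero (hφslit τ)
  have hφabs : ∀ τ : ℝ, y.re ≤ ‖φ τ‖ := by
    intro τ
    calc y.re = (φ τ).re := (hφre τ).symm
      _ ≤ |(φ τ).re| := le_abs_self _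
      _ ≤ ‖φ τ‖ := Complex.abs_re_le_norm _
  have hφD : ∀ τ : ℝ, HasDerivAt φ Complex.I τ := by
    intro τ
    have h1 : HasDerivAt (fun τ : ℝ => (τ:ℂ) * Complex.I) Complex.I τ := by
      simpa using ((hasDerivAt_id (τ:ℂ)).mul_const Complex.I).comp_ofReal
    simpa [hφ] using h1.const_add (y.re:ℂ)
  have hD : ∀ τ : ℝ, HasDerivAt (fun τ => myEin (φ τ) - Complex.log (φ τ))
      (Complex.I • (-Complex.exp (-(φ τ)) / (φ τ))) τ := by
    intro τ
    exact (hasDerivAt_Psi (hφslit τ)).scomp τ (hφD τ)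
  have hcont : Continuous fun τ : ℝ => Complex.I • (-Complex.exp (-(φ τ)) / (φ τ)) := by
    have hφc : Continuous φ := by
      apply continuous_const.add (Continuous.mul _ continuous_const)
      exact Complex.continuous_ofReal
    apply Continuous.fun_const_smul
    exact ((Complex.continuous_exp.comp hφc.neg).neg).div hφc hφne
  have key : (myEin y - Complex.log y) - (myEin (y.re:ℂ) - Complex.log (y.re:ℂ))
      = ∫ τ in (0:ℝ)..y.im, Complex.I • (-Complex.exp (-(φ τ)) / (φ τ)) := by
    rw [intervalIntegral.integral_eq_sub_of_hasDerivAt (fun τ _ => hD τ)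
      (hcont.intervalIntegrable _ _), hφy, hφ0]
  rw [key]
  have := intervalIntegral.norm_integral_le_of_norm_le_const (a := (0:ℝ)) (b := y.im)
    (C := Real.exp (-y.re) / y.re)
    (f := fun τ : ℝ => Complex.I • (-Complex.exp (-(φ τ)) / (φ τ))) ?_
  · calc ‖∫ τ in (0:ℝ)..y.im, Complex.I • (-Complex.exp (-(φ τ)) / (φ τ))‖
        ≤ Real.exp (-y.re) / y.re * |y.im - 0| := this
      _ = Real.exp (-y.re) / y.re * |y.im| := by rw [sub_zero]
  · intro τ _
    rw [norm_smul]
    have hI : ‖Complex.I‖ = 1 := by simp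
    rw [hI, one_mul, norm_div, norm_neg]
    have h1 : ‖Complex.exp (-(φ τ))‖ = Real.exp (-y.re) := by
      rw [Complex.norm_exp]
      congr 1
      simp [hφre τ]
    rw [h1]
    apply div_le_div_of_nonneg_left (Real.exp_pos _).le hre (hφabs τ)

/-! ### Contour lemmas -/

lemma zContour_eq (a₀ aI bI ξ : ℝ) :
    zContour a₀ aI bI ξ = ((a₀ - aI * Real.cosh ξ : ℝ) : ℂ) + ((bI * Real.sinh ξ : ℝ) : ℂ) * Complex.I := by
  unfold zContour
  rw [← Complex.ofReal_cosh, ← Complex.ofReal_sinh]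
  push_cast
  ring

lemma zContour'_eq (aI bI ξ : ℝ) :
    zContour' aI bI ξ = ((-(aI * Real.sinh ξ) : ℝ) : ℂ) + ((bI * Real.cosh ξ : ℝ) : ℂ) * Complex.I := by
  unfold zContour'
  rw [← Complex.ofReal_cosh, ← Complex.ofReal_sinh]
  push_cast
  ring

lemma z_re (a₀ aI bI ξ : ℝ) : (zContour a₀ aI bI ξ).re = a₀ - aI * Real.cosh ξ := by
  rw [zContour_eq]
  simp [Complex.add_re, Complex.ofReal_re, Complex.mul_re, Complex.I_re, Complex.I_im, Complex.ofReal_im, Complex.sinh_ofReal_re, Complex.cosh_ofReal_re]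

lemma z_im (a₀ aI bI ξ : ℝ) : (zContour a₀ aI bI ξ).im = bI * Real.sinh ξ := by
  rw [zContour_eq]
  simp [Complex.add_im, Complex.ofReal_im, Complex.mul_im, Complex.I_im, Complex.ofReal_re, Complex.I_re, Complex.sinh_ofReal_re, Complex.cosh_ofReal_re]

lemma z_slitPlane {a₀ aI bI : ℝ} (h1 : 0 < aI) (h2 : aI < a₀) (h3 : 0 < bI) (ξ : ℝ) :
    zContour a₀ aI bI ξ ∈ Complex.slitPlane := by
  rw [Complex.mem_slitPlane_iff]
  by_cases hξ : ξ = 0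
  · left
    rw [z_re, hξ, Real.cosh_zero]
    linarith
  · right
    rw [z_im]
    exact mul_ne_zero h3.ne' (fun h => hξ (Real.sinh_eq_zero.1 h))

lemma z_ne_zero {a₀ aI bI : ℝ} (h1 : 0 < aI) (h2 : aI < a₀) (h3 : 0 < bI) (ξ : ℝ) :
    zContour a₀ aI bI ξ ≠ 0 :=
  Complex.slitPlane_ne_zero (z_slitPlane h1 h2 h3 ξ)

lemma z_hasDerivAt (a₀ aI bI ξ : ℝ) :
    HasDerivAt (fun s : ℝ => zContour a₀ aI bI s) (zContour' aI bI ξ) ξ := by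
  unfold zContour zContour'
  have hc : HasDerivAt (fun s : ℝ => Complex.cosh ↑s) (Complex.sinh ↑ξ) ξ :=
    (Complex.hasDerivAt_cosh (ξ:ℂ)).comp_ofReal
  have hs : HasDerivAt (fun s : ℝ => Complex.sinh ↑s) (Complex.cosh ↑ξ) ξ :=
    (Complex.hasDerivAt_sinh (ξ:ℂ)).comp_ofReal
  have := ((hc.const_mul (aI:ℂ)).const_sub (a₀:ℂ)).fun_add (hs.const_mul (Complex.I * bI))
  refine this.congr_deriv ?_
  ring

lemma z_conj (a₀ aI bI ξ : ℝ) :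
    zContour a₀ aI bI (-ξ) = (starRingEnd ℂ) (zContour a₀ aI bI ξ) := by
  rw [zContour_eq, zContour_eq]
  rw [map_add, map_mul, Complex.conj_ofReal, Complex.conj_ofReal, Complex.conj_I]
  rw [Real.cosh_neg, Real.sinh_neg]
  push_cast
  ring

lemma z_abs_lower (a₀ aI bI ξ : ℝ) :
    aI * Real.cosh ξ - a₀ ≤ ‖zContour a₀ aI bI ξ‖ := by
  calc aI * Real.cosh ξ - a₀ = -((zContour a₀ aI bI ξ).re) := by rw [z_re]; ring
    _ ≤ |(zContour a₀ aI bI ξ).re| := neg_le_abs _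
    _ ≤ ‖zContour a₀ aI bI ξ‖ := Complex.abs_re_le_norm _

lemma z_continuous (a₀ aI bI : ℝ) : Continuous fun ξ : ℝ => zContour a₀ aI bI ξ := by
  unfold zContour
  exact (continuous_const.sub (continuous_const.mul
    (Complex.continuous_cosh.comp Complex.continuous_ofReal))).add
    (continuous_const.mul (Complex.continuous_sinh.comp Complex.continuous_ofReal))

lemma z'_continuous (aI bI : ℝ) : Continuous fun ξ : ℝ => zContour' aI bI ξ := by
  unfold zContour'
  exact (continuous_const.mul (Complex.continuous_sinh.comp Complex.continuous_ofReal)).add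
    (continuous_const.mul (Complex.continuous_cosh.comp Complex.continuous_ofReal))

lemma z'_abs_le {aI bI : ℝ} (h1 : 0 < aI) (h3 : 0 < bI) (ξ : ℝ) :
    ‖zContour' aI bI ξ‖ ≤ (aI + bI) * Real.cosh ξ := by
  rw [zContour'_eq]
  calc ‖((-(aI * Real.sinh ξ) : ℝ) : ℂ) + ((bI * Real.cosh ξ : ℝ) : ℂ) * Complex.I‖
      ≤ ‖((-(aI * Real.sinh ξ) : ℝ) : ℂ)‖
        + ‖((bI * Real.cosh ξ : ℝ) : ℂ) * Complex.I‖ := norm_add_le _ _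
    _ = |aI * Real.sinh ξ| + |bI * Real.cosh ξ| := by
        rw [norm_mul, Complex.norm_I, mul_one, Complex.norm_real, Complex.norm_real, Real.norm_eq_abs, Real.norm_eq_abs, abs_neg]
    _ ≤ aI * Real.cosh ξ + bI * Real.cosh ξ := by
        apply add_le_add
        · rw [abs_mul, _root_.abs_of_pos h1]
          apply mul_le_mul_of_nonneg_left _ h1.le
          rw [Real.abs_sinh]
          calc Real.sinh |ξ| ≤ Real.cosh |ξ| := (Real.sinh_lt_cosh _).le
            _ = Real.cosh ξ := Real.cosh_abs ξ
        · rw [abs_mul, _root_.abs_of_pos h3, _root_.abs_of_nonneg (Real.cosh_pos ξ).le]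
    _ = (aI + bI) * Real.cosh ξ := by ring

lemma exists_abs_lower {a₀ aI bI : ℝ} (h1 : 0 < aI) (h2 : aI < a₀) (h3 : 0 < bI) :
    ∃ m : ℝ, 0 < m ∧ ∀ ξ : ℝ, m ≤ ‖zContour a₀ aI bI ξ‖ := by
  set r := (a₀ + 1) / aI with hr
  have ha₀ : 0 < a₀ + 1 := by linarith
  have hr0 : 0 < r := div_pos ha₀ h1
  have hmem0 : (0:ℝ) ∈ Set.Icc (-r) r := ⟨by linarith, hr0.le⟩
  obtain ⟨ξ₀, hξ₀mem, hmin⟩ := (isCompact_Icc (a := -r) (b := r)).exists_isMinOn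
    ⟨0, hmem0⟩ ((continuous_norm.comp (z_continuous a₀ aI bI)).continuousOn)
  have hpos : 0 < ‖zContour a₀ aI bI ξ₀‖ :=
    norm_pos_iff.mpr (z_ne_zero h1 h2 h3 ξ₀)
  refine ⟨min 1 (‖zContour a₀ aI bI ξ₀‖), lt_min one_pos hpos, fun ξ => ?_⟩
  by_cases hmemξ : ξ ∈ Set.Icc (-r) r
  · exact le_trans (min_le_right _ _) (hmin hmemξ)
  · have habs : r < |ξ| := by
      rcases abs_cases ξ with ⟨ha, hb⟩ | ⟨ha, hb⟩ <;>
      · rw [ha]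
        simp only [Set.mem_Icc, not_and_or, not_le] at hmemξ
        rcases hmemξ with h | h <;> linarith
    calc min 1 (‖zContour a₀ aI bI ξ₀‖) ≤ 1 := min_le_left _ _
      _ ≤ aI * Real.cosh ξ - a₀ := by
          have hx : aI * r = a₀ + 1 := by rw [hr]; field_simp
          nlinarith [abs_le_cosh ξ, mul_le_mul_of_nonneg_left (abs_le_cosh ξ) h1.le,
            mul_lt_mul_of_pos_left habs h1]
      _ ≤ ‖zContour a₀ aI bI ξ‖ := z_abs_lower a₀ aI bI ξ

/-! ### The key scalar contour integral -/

lemma key_integral {a₀ aI bI t : ℝ} (h1 : 0 < aI) (h2 : aI < a₀) (h3 : 0 < bI) (ht : 0 < t)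
    (hint : Integrable fun ξ : ℝ =>
      Complex.exp (zContour a₀ aI bI ξ * (t:ℂ)) * zContour' aI bI ξ / zContour a₀ aI bI ξ) :
    ∫ ξ : ℝ, Complex.exp (zContour a₀ aI bI ξ * (t:ℂ)) * zContour' aI bI ξ / zContour a₀ aI bI ξ
      = 2 * (Real.pi : ℂ) * Complex.I := by
  set P : ℂ → ℂ := fun w => Complex.log w - myEin (-w * (t:ℂ)) with hP
  have htC : (t:ℂ) ≠ 0 := by
    simp only [ne_eq, Complex.ofReal_eq_zero]; exact ht.ne'
  -- derivative of P ∘ z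
  have hPz : ∀ ξ : ℝ, HasDerivAt (fun s : ℝ => P (zContour a₀ aI bI s))
      (Complex.exp (zContour a₀ aI bI ξ * (t:ℂ)) * zContour' aI bI ξ / zContour a₀ aI bI ξ) ξ := by
    intro ξ
    have hzslit := z_slitPlane h1 h2 h3 ξ
    have hz0 : zContour a₀ aI bI ξ ≠ 0 := Complex.slitPlane_ne_zero hzslit
    have hy0 : -zContour a₀ aI bI ξ * (t:ℂ) ≠ 0 := mul_ne_zero (neg_ne_zero.2 hz0) htC
    have hlog := Complex.hasDerivAt_log hzslit
    have hinner : HasDerivAt (fun w : ℂ => -w * (t:ℂ)) (-(t:ℂ)) (zContour a₀ aI bI ξ) := by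
      simpa using ((hasDerivAt_id (zContour a₀ aI bI ξ)).neg.mul_const (t:ℂ))
    have hein := (myEin_hasDerivAt hy0).comp (zContour a₀ aI bI ξ) hinner
    have hPd := hlog.fun_sub hein
    have hzD := z_hasDerivAt a₀ aI bI ξ
    have hfinal := hPd.scomp ξ hzD
    refine hfinal.congr_deriv ?_
    simp only [smul_eq_mul, Function.comp, neg_neg]
    field_simp
    ring
  have hcont : Continuous fun ξ : ℝ =>
      Complex.exp (zContour a₀ aI bI ξ * (t:ℂ)) * zContour' aI bI ξ / zContour a₀ aI bI ξ := by
    apply Continuous.div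
    · exact (Complex.continuous_exp.comp ((z_continuous a₀ aI bI).mul continuous_const)).mul
        (z'_continuous aI bI)
    · exact z_continuous a₀ aI bI
    · exact fun ξ => z_ne_zero h1 h2 h3 ξ
  have hFTC : ∀ R : ℝ, (∫ ξ in (-R)..R,
      Complex.exp (zContour a₀ aI bI ξ * (t:ℂ)) * zContour' aI bI ξ / zContour a₀ aI bI ξ)
      = P (zContour a₀ aI bI R) - P (zContour a₀ aI bI (-R)) := fun R =>
    intervalIntegral.integral_eq_sub_of_hasDerivAt (fun ξ _ => hPz ξ)
      (hcont.intervalIntegrable _ _)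
  have hT1 : Tendsto (fun R : ℝ => ∫ ξ in (-R)..R,
      Complex.exp (zContour a₀ aI bI ξ * (t:ℂ)) * zContour' aI bI ξ / zContour a₀ aI bI ξ)
      atTop (𝓝 (∫ ξ : ℝ,
      Complex.exp (zContour a₀ aI bI ξ * (t:ℂ)) * zContour' aI bI ξ / zContour a₀ aI bI ξ)) :=
    intervalIntegral_tendsto_integral hint tendsto_neg_atTop_atBot tendsto_id
  -- conjugation symmetry
  have hconjP : ∀ R : ℝ, P (zContour a₀ aI bI (-R)) = (starRingEnd ℂ) (P (zContour a₀ aI bI R)) := by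
    intro R
    have harg : (zContour a₀ aI bI R).arg ≠ Real.pi :=
      Complex.slitPlane_arg_ne_pi (z_slitPlane h1 h2 h3 R)
    have h4 : -((starRingEnd ℂ) (zContour a₀ aI bI R)) * (t:ℂ)
        = (starRingEnd ℂ) (-zContour a₀ aI bI R * (t:ℂ)) := by
      rw [map_mul, map_neg, Complex.conj_ofReal]
    rw [hP]
    simp only
    rw [z_conj a₀ aI bI R, Complex.log_conj _ harg, h4, myEin_conj, map_sub]
  -- the imaginary part of `P (z R)` tends to `π`
  have hyre : ∀ R : ℝ, (-zContour a₀ aI bI R * (t:ℂ)).re = t * (aI * Real.cosh R - a₀) := by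
    intro R
    simp [Complex.mul_re, Complex.ofReal_re, Complex.ofReal_im, Complex.neg_re, Complex.neg_im,
      z_re, z_im]
    ring
  have hyim : ∀ R : ℝ, (-zContour a₀ aI bI R * (t:ℂ)).im = -(t * (bI * Real.sinh R)) := by
    intro R
    simp [Complex.mul_im, Complex.ofReal_re, Complex.ofReal_im, Complex.neg_re, Complex.neg_im,
      z_re, z_im]
    ring
  have hEv : ∀ᶠ R : ℝ in atTop, 1 ≤ t * (aI * Real.cosh R - a₀) ∧ 0 < R := by
    filter_upwards [tendsto_cosh_atTop.eventually_ge_atTop ((a₀ + 1/t)/aI),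
      eventually_gt_atTop (0:ℝ)] with R hR hR0
    refine ⟨?_, hR0⟩
    have hdiv := (div_le_iff₀ h1).1 hR
    have h1t : 1/t ≤ aI * Real.cosh R - a₀ := by nlinarith
    calc (1:ℝ) = t * (1/t) := by field_simp
      _ ≤ t * (aI * Real.cosh R - a₀) := mul_le_mul_of_nonneg_left h1t ht.le
  -- pointwise formula for the imaginary part, eventually
  have hImPeq : ∀ᶠ R : ℝ in atTop, (P (zContour a₀ aI bI R)).im
      = Real.pi - (myEin (-zContour a₀ aI bI R * (t:ℂ))
          - Complex.log (-zContour a₀ aI bI R * (t:ℂ))).im := by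
    filter_upwards [hEv] with R hR
    obtain ⟨hRe1, hR0⟩ := hR
    set y := -zContour a₀ aI bI R * (t:ℂ) with hy
    have him_pos : 0 < (zContour a₀ aI bI R).im := by
      rw [z_im]; exact mul_pos h3 (Real.sinh_pos_iff.2 hR0)
    have hargneg : (-(zContour a₀ aI bI R)).arg = (zContour a₀ aI bI R).arg - Real.pi :=
      Complex.arg_neg_eq_arg_sub_pi_of_im_pos him_pos
    have hyarg : y.arg = (-(zContour a₀ aI bI R)).arg := by
      have : y = (t:ℂ) * (-(zContour a₀ aI bI R)) := by rw [hy]; ring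
      rw [this]
      exact Complex.arg_real_mul _ ht
    have hargz : (zContour a₀ aI bI R).arg = y.arg + Real.pi := by
      rw [hyarg, hargneg]; ring
    rw [hP]
    simp only [Complex.sub_im, Complex.log_im]
    rw [hargz]
    ring
  -- the correction tends to zero
  have hpsiT : Tendsto (fun R : ℝ => (myEin (-zContour a₀ aI bI R * (t:ℂ))
      - Complex.log (-zContour a₀ aI bI R * (t:ℂ))).im) atTop (𝓝 0) := by
    apply squeeze_zero_norm' (a := fun R : ℝ =>
      (t * bI * Real.exp (a₀ * t)) * (Real.cosh R * Real.exp (-(t * aI * Real.cosh R))))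
    · filter_upwards [hEv] with R hR
      obtain ⟨hRe1, hR0⟩ := hR
      set y := -zContour a₀ aI bI R * (t:ℂ) with hy
      have hyrepos : 0 < y.re := by rw [hy, hyre]; linarith
      have him0 : (myEin ((y.re:ℝ):ℂ) - Complex.log ((y.re:ℝ):ℂ)).im = 0 := by
        rw [Complex.sub_im, myEin_real_im, Complex.log_im, Complex.arg_ofReal_of_nonneg hyrepos.le]
        ring
      have hnorm : |(myEin y - Complex.log y).im|
          ≤ Real.exp (-y.re) / y.re * |y.im| := by
        have h5 : (myEin y - Complex.log y).im
            = ((myEin y - Complex.log y) - (myEin (y.re:ℂ) - Complex.log (y.re:ℂ))).im := by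
          rw [Complex.sub_im] at him0
          simp only [Complex.sub_im]
          linarith
        rw [h5]
        calc |((myEin y - Complex.log y) - (myEin (y.re:ℂ) - Complex.log (y.re:ℂ))).im|
            ≤ ‖(myEin y - Complex.log y) - (myEin (y.re:ℂ) - Complex.log (y.re:ℂ))‖ :=
              Complex.abs_im_le_norm _
          _ ≤ Real.exp (-y.re) / y.re * |y.im| := psi_bound hyrepos
      rw [Real.norm_eq_abs]
      refine hnorm.trans ?_
      have hyre' : y.re = t * (aI * Real.cosh R - a₀) := by rw [hy, hyre]
      have hyim' : |y.im| = t * (bI * Real.sinh R) := by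
        rw [hy, hyim, abs_neg, _root_.abs_of_nonneg]
        exact mul_nonneg ht.le (mul_nonneg h3.le (Real.sinh_pos_iff.2 hR0).le)
      have hre1 : 1 ≤ y.re := by rw [hyre']; exact hRe1
      have hq1 : Real.exp (-y.re)/y.re ≤ Real.exp (-y.re) :=
        div_le_self (Real.exp_pos _).le hre1
      have hq2 : Real.exp (-y.re) = Real.exp (a₀*t) * Real.exp (-(t*aI*Real.cosh R)) := by
        rw [← Real.exp_add, hyre']; ring_nf
      have hq3 : |y.im| ≤ t * bI * Real.cosh R := by
        rw [hyim']
        have hsc := (Real.sinh_lt_cosh R).le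
        nlinarith [mul_le_mul_of_nonneg_left hsc (mul_nonneg ht.le h3.le)]
      calc Real.exp (-y.re)/y.re * |y.im| ≤ Real.exp (-y.re) * (t*bI*Real.cosh R) :=
            mul_le_mul hq1 hq3 (abs_nonneg _) (Real.exp_pos _).le
        _ = (t*bI*Real.exp (a₀*t)) * (Real.cosh R * Real.exp (-(t*aI*Real.cosh R))) := by
            rw [hq2]; ring
    · have := (tendsto_cosh_mul_exp (c := t * aI) (by positivity)).const_mul
        (t * bI * Real.exp (a₀ * t))
      simpa using this
  have hImP : Tendsto (fun R : ℝ => (P (zContour a₀ aI bI R)).im) atTop (𝓝 Real.pi) := by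
    have h6 : Tendsto (fun R : ℝ => Real.pi - (myEin (-zContour a₀ aI bI R * (t:ℂ))
        - Complex.log (-zContour a₀ aI bI R * (t:ℂ))).im) atTop (𝓝 (Real.pi - 0)) :=
      tendsto_const_nhds.sub hpsiT
    rw [sub_zero] at h6
    exact Tendsto.congr' (hImPeq.mono fun R hR => hR.symm) h6
  have hT2 : Tendsto (fun R : ℝ => P (zContour a₀ aI bI R) - P (zContour a₀ aI bI (-R)))
      atTop (𝓝 (2 * (Real.pi:ℂ) * Complex.I)) := by
    have heq : ∀ R : ℝ, P (zContour a₀ aI bI R) - P (zContour a₀ aI bI (-R))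
        = ((2 * (P (zContour a₀ aI bI R)).im : ℝ) : ℂ) * Complex.I := by
      intro R; rw [hconjP R]; exact Complex.sub_conj _
    have h7 : Tendsto (fun R : ℝ => ((2 * (P (zContour a₀ aI bI R)).im : ℝ) : ℂ) * Complex.I)
        atTop (𝓝 (((2 * Real.pi : ℝ) : ℂ) * Complex.I)) := by
      apply Tendsto.mul_const
      exact (Complex.continuous_ofReal.tendsto _).comp (hImP.const_mul 2)
    have h8 : ((2 * Real.pi : ℝ) : ℂ) * Complex.I = 2 * (Real.pi:ℂ) * Complex.I := by
      push_cast; ring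
    rw [h8] at h7
    exact Tendsto.congr (fun R => (heq R).symm) h7
  exact tendsto_nhds_unique (Tendsto.congr (fun R => hFTC R) hT1) hT2

end CorrectedProp

/-- On [the parametrized hyperbolic contour with `0 < a_I < a₀`, `b_I > 0`,
and a sectorial resolvent bound, the naive and the corrected representations of the
fractional propagator `S_α(t)x` coincide for `t > 0`:
`(1/(2πi)) ∫ e^{z t} z' z^{α−1} (z^α I + A)⁻¹ x dξ
  = x + (1/(2πi)) ∫ e^{z t} z' [z^{α−1} (z^α I + A)⁻¹ x − z⁻¹ x] dξ`,
both integrands being Bochner integrable. -/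
theorem corrected_propagator_representation
    {X : Type*} [NormedAddCommGroup X] [NormedSpace ℂ X] [CompleteSpace X]
    (A : X →L[ℂ] X) (α : ℝ) (hα : α ∈ Set.Ioo (0 : ℝ) 2) (M : ℝ) (hM : 0 < M)
    (a₀ aI bI : ℝ) (h1 : 0 < aI) (h2 : aI < a₀) (h3 : 0 < bI)
    (hinv : ∀ ξ : ℝ,
      IsUnit ((zContour a₀ aI bI ξ ^ (α : ℂ)) • (1 : X →L[ℂ] X) + A))
    (hbound : ∀ ξ : ℝ,
      ‖Ring.inverse ((zContour a₀ aI bI ξ ^ (α : ℂ)) • (1 : X →L[ℂ] X) + A)‖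
        ≤ M / (1 + ‖zContour a₀ aI bI ξ‖ ^ α))
    (t : ℝ) (ht : 0 < t) (x : X) :
    Integrable (fun ξ : ℝ =>
      (Complex.exp (zContour a₀ aI bI ξ * (t : ℂ)) * zContour' aI bI ξ *
          zContour a₀ aI bI ξ ^ ((α : ℂ) - 1)) •
        (Ring.inverse ((zContour a₀ aI bI ξ ^ (α : ℂ)) • (1 : X →L[ℂ] X) + A)) x) ∧
    Integrable (fun ξ : ℝ =>
      (Complex.exp (zContour a₀ aI bI ξ * (t : ℂ)) * zContour' aI bI ξ) •
        ((zContour a₀ aI bI ξ ^ ((α : ℂ) - 1)) •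
            (Ring.inverse ((zContour a₀ aI bI ξ ^ (α : ℂ)) • (1 : X →L[ℂ] X) + A)) x
          - (zContour a₀ aI bI ξ)⁻¹ • x)) ∧
    (1 / (2 * (Real.pi : ℂ) * Complex.I)) •
        (∫ ξ : ℝ, (Complex.exp (zContour a₀ aI bI ξ * (t : ℂ)) * zContour' aI bI ξ *
            zContour a₀ aI bI ξ ^ ((α : ℂ) - 1)) •
          (Ring.inverse ((zContour a₀ aI bI ξ ^ (α : ℂ)) • (1 : X →L[ℂ] X) + A)) x)
      = x + (1 / (2 * (Real.pi : ℂ) * Complex.I)) •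
        (∫ ξ : ℝ, (Complex.exp (zContour a₀ aI bI ξ * (t : ℂ)) * zContour' aI bI ξ) •
          ((zContour a₀ aI bI ξ ^ ((α : ℂ) - 1)) •
              (Ring.inverse ((zContour a₀ aI bI ξ ^ (α : ℂ)) • (1 : X →L[ℂ] X) + A)) x
            - (zContour a₀ aI bI ξ)⁻¹ • x)) := by
  obtain ⟨m, hm0, hm⟩ := CorrectedProp.exists_abs_lower h1 h2 h3
  have hzslit : ∀ ξ : ℝ, zContour a₀ aI bI ξ ∈ Complex.slitPlane :=
    CorrectedProp.z_slitPlane h1 h2 h3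
  have hz0 : ∀ ξ : ℝ, zContour a₀ aI bI ξ ≠ 0 := CorrectedProp.z_ne_zero h1 h2 h3
  have hzpos : ∀ ξ : ℝ, 0 < ‖zContour a₀ aI bI ξ‖ :=
    fun ξ => norm_pos_iff.mpr (hz0 ξ)
  have haIt : 0 < aI * t := mul_pos h1 ht
  -- continuity facts
  have hzc := CorrectedProp.z_continuous a₀ aI bI
  have hz'c := CorrectedProp.z'_continuous aI bI
  have hec : Continuous fun ξ : ℝ => Complex.exp (zContour a₀ aI bI ξ * (t:ℂ)) :=
    Complex.continuous_exp.comp (hzc.mul continuous_const)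
  have hcpow : ∀ b : ℂ, Continuous fun ξ : ℝ => zContour a₀ aI bI ξ ^ b := by
    intro b
    refine continuous_iff_continuousAt.2 fun ξ => ?_
    exact (continuousAt_cpow_const (hzslit ξ)).comp hzc.continuousAt
  have hRc : Continuous fun ξ : ℝ =>
      Ring.inverse ((zContour a₀ aI bI ξ ^ (α:ℂ)) • (1 : X →L[ℂ] X) + A) := by
    refine continuous_iff_continuousAt.2 fun ξ => ?_
    have hB : Continuous fun ξ : ℝ => (zContour a₀ aI bI ξ ^ (α:ℂ)) • (1 : X →L[ℂ] X) + A :=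
      ((hcpow (α:ℂ)).smul continuous_const).add continuous_const
    have h5 : ContinuousAt Ring.inverse (((hinv ξ).unit : X →L[ℂ] X)) :=
      NormedRing.inverse_continuousAt _
    rw [IsUnit.unit_spec] at h5
    have hB' : ContinuousAt (fun ξ : ℝ => (zContour a₀ aI bI ξ ^ (α:ℂ)) • (1 : X →L[ℂ] X) + A) ξ :=
      hB.continuousAt
    exact ContinuousAt.comp (g := Ring.inverse)
      (f := fun ξ : ℝ => (zContour a₀ aI bI ξ ^ (α:ℂ)) • (1 : X →L[ℂ] X) + A) h5 hB'
  have hRxc : Continuous fun ξ : ℝ =>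
      (Ring.inverse ((zContour a₀ aI bI ξ ^ (α:ℂ)) • (1 : X →L[ℂ] X) + A)) x :=
    hRc.clm_apply continuous_const
  -- norm identities
  have habse : ∀ ξ : ℝ, ‖Complex.exp (zContour a₀ aI bI ξ * (t:ℂ))‖
      = Real.exp (a₀*t) * Real.exp (-(aI*t*Real.cosh ξ)) := by
    intro ξ
    rw [Complex.norm_exp, ← Real.exp_add]
    congr 1
    have h6 : (zContour a₀ aI bI ξ * (t:ℂ)).re = (a₀ - aI*Real.cosh ξ) * t := by
      simp [Complex.mul_re, CorrectedProp.z_re, CorrectedProp.z_im]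
    rw [h6]; ring
  have habsz' : ∀ ξ : ℝ, ‖zContour' aI bI ξ‖ ≤ (aI+bI) * Real.cosh ξ := by
    intro ξ; exact CorrectedProp.z'_abs_le h1 h3 ξ
  have habscpow : ∀ ξ : ℝ, ‖zContour a₀ aI bI ξ ^ ((α:ℂ)-1)‖
      = ‖zContour a₀ aI bI ξ‖ ^ (α-1) := by
    intro ξ
    have h7 : ((α:ℂ) - 1) = ((α - 1 : ℝ) : ℂ) := by push_cast; ring
    rw [h7, Complex.norm_cpow_real]
  have hkey_frac : ∀ ξ : ℝ,
      ‖zContour a₀ aI bI ξ‖ ^ (α-1)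
        * (M / (1 + ‖zContour a₀ aI bI ξ‖ ^ α)) ≤ M / m := by
    intro ξ
    set q := ‖zContour a₀ aI bI ξ‖ with hq
    have hq0 : 0 < q := hzpos ξ
    have hden : (0:ℝ) < 1 + q ^ α := by positivity
    have heq : q^(α-1) * (M/(1+q^α)) = M * ((q^α/(1+q^α)) * q⁻¹) := by
      rw [Real.rpow_sub hq0, Real.rpow_one]
      field_simp
    rw [heq]
    have hfrac : q^α/(1+q^α) ≤ 1 := by
      rw [div_le_one hden]; linarith
    have hinvle : q⁻¹ ≤ m⁻¹ := inv_anti₀ hm0 (hm ξ)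
    calc M * ((q^α/(1+q^α)) * q⁻¹) ≤ M * (1 * m⁻¹) := by
          apply mul_le_mul_of_nonneg_left _ hM.le
          exact mul_le_mul hfrac hinvle (by positivity) one_pos.le
      _ = M / m := by rw [one_mul, ← div_eq_mul_inv]
  have hmaj : ∀ C : ℝ, Integrable fun ξ : ℝ =>
      C * (Real.cosh ξ * Real.exp (-(aI*t*Real.cosh ξ))) :=
    fun C => (CorrectedProp.integrable_cosh_exp haIt).const_mul C
  -- Integrability of the first integrand
  have hint1 : Integrable (fun ξ : ℝ =>
      (Complex.exp (zContour a₀ aI bI ξ * (t : ℂ)) * zContour' aI bI ξ *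
          zContour a₀ aI bI ξ ^ ((α : ℂ) - 1)) •
        (Ring.inverse ((zContour a₀ aI bI ξ ^ (α : ℂ)) • (1 : X →L[ℂ] X) + A)) x) := by
    apply Integrable.mono' (hmaj (Real.exp (a₀*t) * ((aI+bI) * (M/m * ‖x‖))))
    · exact (((hec.mul hz'c).mul (hcpow _)).smul hRxc).aestronglyMeasurable
    · refine ae_of_all _ fun ξ => ?_
      rw [norm_smul, norm_mul, norm_mul, habse, habscpow]
      have hRx : ‖(Ring.inverse ((zContour a₀ aI bI ξ ^ (α : ℂ)) • (1 : X →L[ℂ] X) + A)) x‖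
          ≤ M / (1 + ‖zContour a₀ aI bI ξ‖ ^ α) * ‖x‖ :=
        le_trans (ContinuousLinearMap.le_opNorm _ x)
          (mul_le_mul_of_nonneg_right (hbound ξ) (norm_nonneg x))
      calc Real.exp (a₀*t) * Real.exp (-(aI*t*Real.cosh ξ)) * ‖zContour' aI bI ξ‖
            * ‖zContour a₀ aI bI ξ‖ ^ (α-1)
            * ‖(Ring.inverse ((zContour a₀ aI bI ξ ^ (α : ℂ)) • (1 : X →L[ℂ] X) + A)) x‖
          ≤ Real.exp (a₀*t) * Real.exp (-(aI*t*Real.cosh ξ)) * ((aI+bI) * Real.cosh ξ)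
            * ‖zContour a₀ aI bI ξ‖ ^ (α-1)
            * (M / (1 + ‖zContour a₀ aI bI ξ‖ ^ α) * ‖x‖) := by
            have hz'le := habsz' ξ
            gcongr
        _ = (Real.exp (a₀*t) * ((aI+bI) * ‖x‖))
            * (‖zContour a₀ aI bI ξ‖ ^ (α-1)
              * (M / (1 + ‖zContour a₀ aI bI ξ‖ ^ α)))
            * (Real.cosh ξ * Real.exp (-(aI*t*Real.cosh ξ))) := by ring
        _ ≤ (Real.exp (a₀*t) * ((aI+bI) * ‖x‖)) * (M/m)
            * (Real.cosh ξ * Real.exp (-(aI*t*Real.cosh ξ))) := by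
            apply mul_le_mul_of_nonneg_right
              (mul_le_mul_of_nonneg_left (hkey_frac ξ) (by positivity)) (by positivity)
        _ = Real.exp (a₀*t) * ((aI+bI) * (M/m * ‖x‖))
            * (Real.cosh ξ * Real.exp (-(aI*t*Real.cosh ξ))) := by ring
  -- Integrability of the "1/z" integrand
  have hint3 : Integrable (fun ξ : ℝ =>
      (Complex.exp (zContour a₀ aI bI ξ * (t : ℂ)) * zContour' aI bI ξ
        * (zContour a₀ aI bI ξ)⁻¹) • x) := by
    apply Integrable.mono' (hmaj (Real.exp (a₀*t) * ((aI+bI) * (m⁻¹ * ‖x‖))))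
    · exact (((hec.mul hz'c).mul ((hzc.inv₀ hz0))).smul continuous_const).aestronglyMeasurable
    · refine ae_of_all _ fun ξ => ?_
      rw [norm_smul, norm_mul, norm_mul, habse, norm_inv]
      have hinvle : ‖zContour a₀ aI bI ξ‖⁻¹ ≤ m⁻¹ := by
        exact inv_anti₀ hm0 (hm ξ)
      calc Real.exp (a₀*t) * Real.exp (-(aI*t*Real.cosh ξ)) * ‖zContour' aI bI ξ‖
            * ‖zContour a₀ aI bI ξ‖⁻¹ * ‖x‖
          ≤ Real.exp (a₀*t) * Real.exp (-(aI*t*Real.cosh ξ)) * ((aI+bI) * Real.cosh ξ)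
            * m⁻¹ * ‖x‖ := by
            have hz'le := habsz' ξ
            gcongr
        _ = Real.exp (a₀*t) * ((aI+bI) * (m⁻¹ * ‖x‖))
            * (Real.cosh ξ * Real.exp (-(aI*t*Real.cosh ξ))) := by ring
  -- pointwise identity between the integrands
  have hf2eq : ∀ ξ : ℝ,
      (Complex.exp (zContour a₀ aI bI ξ * (t : ℂ)) * zContour' aI bI ξ) •
        ((zContour a₀ aI bI ξ ^ ((α : ℂ) - 1)) •
            (Ring.inverse ((zContour a₀ aI bI ξ ^ (α : ℂ)) • (1 : X →L[ℂ] X) + A)) x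
          - (zContour a₀ aI bI ξ)⁻¹ • x)
      = (Complex.exp (zContour a₀ aI bI ξ * (t : ℂ)) * zContour' aI bI ξ *
          zContour a₀ aI bI ξ ^ ((α : ℂ) - 1)) •
        (Ring.inverse ((zContour a₀ aI bI ξ ^ (α : ℂ)) • (1 : X →L[ℂ] X) + A)) x
        - (Complex.exp (zContour a₀ aI bI ξ * (t : ℂ)) * zContour' aI bI ξ
          * (zContour a₀ aI bI ξ)⁻¹) • x := by
    intro ξ
    rw [smul_sub, smul_smul, smul_smul]
  have hint2 : Integrable (fun ξ : ℝ =>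
      (Complex.exp (zContour a₀ aI bI ξ * (t : ℂ)) * zContour' aI bI ξ) •
        ((zContour a₀ aI bI ξ ^ ((α : ℂ) - 1)) •
            (Ring.inverse ((zContour a₀ aI bI ξ ^ (α : ℂ)) • (1 : X →L[ℂ] X) + A)) x
          - (zContour a₀ aI bI ξ)⁻¹ • x)) :=
    (hint1.sub hint3).congr (ae_of_all _ fun ξ => (hf2eq ξ).symm)
  refine ⟨hint1, hint2, ?_⟩
  -- value of the scalar integral
  have hinth : Integrable (fun ξ : ℝ =>
      Complex.exp (zContour a₀ aI bI ξ * (t:ℂ)) * zContour' aI bI ξ / zContour a₀ aI bI ξ) := by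
    apply Integrable.mono' (hmaj (Real.exp (a₀*t) * ((aI+bI) * m⁻¹)))
    · exact ((hec.mul hz'c).div hzc hz0).aestronglyMeasurable
    · refine ae_of_all _ fun ξ => ?_
      rw [norm_div, norm_mul, habse]
      have hinvle : ‖zContour a₀ aI bI ξ‖⁻¹ ≤ m⁻¹ := by
        exact inv_anti₀ hm0 (hm ξ)
      rw [div_eq_mul_inv]
      calc Real.exp (a₀*t) * Real.exp (-(aI*t*Real.cosh ξ)) * ‖zContour' aI bI ξ‖
            * ‖zContour a₀ aI bI ξ‖⁻¹
          ≤ Real.exp (a₀*t) * Real.exp (-(aI*t*Real.cosh ξ)) * ((aI+bI) * Real.cosh ξ)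
            * m⁻¹ := by
            have hz'le := habsz' ξ
            gcongr
        _ = Real.exp (a₀*t) * ((aI+bI) * m⁻¹)
            * (Real.cosh ξ * Real.exp (-(aI*t*Real.cosh ξ))) := by ring
  have hK := CorrectedProp.key_integral h1 h2 h3 ht hinth
  -- integral of the "1/z" integrand
  have hI3 : (∫ ξ : ℝ, (Complex.exp (zContour a₀ aI bI ξ * (t : ℂ)) * zContour' aI bI ξ
        * (zContour a₀ aI bI ξ)⁻¹) • x)
      = (2 * (Real.pi : ℂ) * Complex.I) • x := by
    have heq9 : (fun ξ : ℝ => Complex.exp (zContour a₀ aI bI ξ * (t : ℂ)) * zContour' aI bI ξ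
        * (zContour a₀ aI bI ξ)⁻¹)
        = fun ξ : ℝ => Complex.exp (zContour a₀ aI bI ξ * (t:ℂ)) * zContour' aI bI ξ
          / zContour a₀ aI bI ξ := by
      funext ξ; rw [div_eq_mul_inv]
    rw [integral_smul_const, heq9, hK]
  -- integral identity
  have hI2 : (∫ ξ : ℝ, (Complex.exp (zContour a₀ aI bI ξ * (t : ℂ)) * zContour' aI bI ξ) •
        ((zContour a₀ aI bI ξ ^ ((α : ℂ) - 1)) •
            (Ring.inverse ((zContour a₀ aI bI ξ ^ (α : ℂ)) • (1 : X →L[ℂ] X) + A)) x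
          - (zContour a₀ aI bI ξ)⁻¹ • x))
      = (∫ ξ : ℝ, (Complex.exp (zContour a₀ aI bI ξ * (t : ℂ)) * zContour' aI bI ξ *
            zContour a₀ aI bI ξ ^ ((α : ℂ) - 1)) •
          (Ring.inverse ((zContour a₀ aI bI ξ ^ (α : ℂ)) • (1 : X →L[ℂ] X) + A)) x)
        - (2 * (Real.pi : ℂ) * Complex.I) • x := by
    rw [← hI3, ← MeasureTheory.integral_sub hint1 hint3]
    congr 1
    funext ξ
    exact hf2eq ξ
  rw [hI2, smul_sub, smul_smul]
  have hc1 : (1 / (2 * (Real.pi : ℂ) * Complex.I)) * (2 * (Real.pi : ℂ) * Complex.I) = 1 := by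
    apply one_div_mul_cancel
    exact mul_ne_zero (mul_ne_zero two_ne_zero (Complex.ofReal_ne_zero.2 Real.pi_ne_zero))
      Complex.I_ne_zero
  rw [hc1, one_smul]
  abel
end

section
/- Let X be a complex Banach space, A : X → X a bounded linear operator, α > 0 and β ≥ 1 real, m a natural number, z a nonzero complex number, and M > 0. Assume that z^α·I − A is invertible in the algebra of bounded operators with ‖(z^α·I − A)^{-1}‖ ≤ M/(1 + |z|^α). Then for every x ∈ X, ‖ z^{α−β} (z^α·I − A)^{-1} x − z^{−β} ∑_{k=0}^{m} z^{−αk} A^k x ‖ ≤ M·‖A^{m+1} x‖ / ( |z|^{mα+β} · (1 + |z|^α) ). -/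
/-- Neumann-expansion remainder bound for the scaled resolvent: if
`z^α I − A` is invertible with `‖(z^α I − A)⁻¹‖ ≤ M/(1 + |z|^α)`, then
`‖z^{α−β}(z^α I − A)⁻¹ x − z^{−β} ∑_{k=0}^{m} z^{−αk} A^k x‖
  ≤ M ‖A^{m+1} x‖ / (|z|^{mα+β} (1 + |z|^α))`. -/
theorem resolvent_neumann_remainder_bound
    {X : Type*} [NormedAddCommGroup X] [NormedSpace ℂ X] [CompleteSpace X]
    (A : X →L[ℂ] X) (α β : ℝ) (hα : 0 < α) (hβ : 1 ≤ β) (m : ℕ)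
    (z : ℂ) (hz : z ≠ 0) (M : ℝ) (hM : 0 < M)
    (hinv : IsUnit ((z ^ (α : ℂ)) • (1 : X →L[ℂ] X) - A))
    (hbound : ‖Ring.inverse ((z ^ (α : ℂ)) • (1 : X →L[ℂ] X) - A)‖
      ≤ M / (1 + ‖z‖ ^ α)) :
    ∀ x : X,
      ‖(z ^ ((α : ℂ) - (β : ℂ))) •
            (Ring.inverse ((z ^ (α : ℂ)) • (1 : X →L[ℂ] X) - A)) x
          - (z ^ (-(β : ℂ))) • ∑ k ∈ Finset.range (m + 1),
              (z ^ (-((α : ℂ) * (k : ℂ)))) • (A ^ k) x‖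
        ≤ M * ‖(A ^ (m + 1)) x‖ /
            (‖z‖ ^ ((m : ℝ) * α + β) * (1 + ‖z‖ ^ α)) := by
  intro x
  set w : ℂ := z ^ (α : ℂ) with hw_def
  set R : X →L[ℂ] X := Ring.inverse (w • (1 : X →L[ℂ] X) - A) with hR_def
  have hRl : R * (w • (1 : X →L[ℂ] X) - A) = 1 := Ring.inverse_mul_cancel _ hinv
  have hcomm : Commute (w • (1 : X →L[ℂ] X)) A := by
    simp [Commute, SemiconjBy, smul_mul_assoc, mul_smul_comm]
  have hpow : ∀ n : ℕ, w ^ n = z ^ ((α : ℂ) * n) := by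
    intro n
    induction n with
    | zero => simp
    | succ n ih =>
      rw [pow_succ, ih, hw_def, ← Complex.cpow_add _ _ hz]
      congr 1
      push_cast
      ring
  -- geometric sum identity for the resolvent
  have hgeom := hcomm.mul_geom_sum₂ (m + 1)
  have hS : (∑ i ∈ Finset.range (m + 1),
        (w • (1 : X →L[ℂ] X)) ^ i * A ^ (m + 1 - 1 - i))
      = w ^ (m + 1) • R - R * A ^ (m + 1) := by
    have h1 : R * ((w • (1 : X →L[ℂ] X) - A) *
          ∑ i ∈ Finset.range (m + 1), (w • (1 : X →L[ℂ] X)) ^ i * A ^ (m + 1 - 1 - i))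
        = ∑ i ∈ Finset.range (m + 1), (w • (1 : X →L[ℂ] X)) ^ i * A ^ (m + 1 - 1 - i) := by
      rw [← mul_assoc, hRl, one_mul]
    rw [hgeom] at h1
    rw [← h1, mul_sub, smul_pow, one_pow, mul_smul_comm, mul_one]
  have hSx : (∑ i ∈ Finset.range (m + 1), w ^ i • (A ^ (m - i)) x)
      = w ^ (m + 1) • R x - R ((A ^ (m + 1)) x) := by
    have := congrFun (congrArg DFunLike.coe hS) x
    simpa [ContinuousLinearMap.sum_apply, ContinuousLinearMap.mul_apply, smul_pow]
      using this
  set c : ℂ := z ^ (-((β : ℂ) + (α : ℂ) * m)) with hc_def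
  have key : z ^ ((α : ℂ) - (β : ℂ)) • R x
      - z ^ (-(β : ℂ)) • ∑ k ∈ Finset.range (m + 1), z ^ (-((α : ℂ) * k)) • (A ^ k) x
      = c • R ((A ^ (m + 1)) x) := by
    have h1 : z ^ (-(β : ℂ)) • ∑ k ∈ Finset.range (m + 1),
          z ^ (-((α : ℂ) * k)) • (A ^ k) x
        = ∑ k ∈ Finset.range (m + 1), z ^ (-((β : ℂ) + (α : ℂ) * k)) • (A ^ k) x := by
      rw [Finset.smul_sum]
      refine Finset.sum_congr rfl fun k _ => ?_
      rw [smul_smul, ← Complex.cpow_add _ _ hz]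
      congr 1
      ring
    have h2 : ∑ k ∈ Finset.range (m + 1), z ^ (-((β : ℂ) + (α : ℂ) * k)) • (A ^ k) x
        = ∑ i ∈ Finset.range (m + 1), (c * w ^ i) • (A ^ (m - i)) x := by
      rw [← Finset.sum_range_reflect]
      refine Finset.sum_congr rfl fun i hi => ?_
      have him : i ≤ m := Nat.lt_succ_iff.mp (Finset.mem_range.mp hi)
      rw [Nat.add_sub_cancel]
      congr 1
      rw [hc_def, hpow i, ← Complex.cpow_add _ _ hz]
      congr 1
      rw [Nat.cast_sub him]
      ring
    have h3 : ∑ i ∈ Finset.range (m + 1), (c * w ^ i) • (A ^ (m - i)) x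
        = c • (w ^ (m + 1) • R x - R ((A ^ (m + 1)) x)) := by
      rw [← hSx, Finset.smul_sum]
      exact Finset.sum_congr rfl fun i _ => (smul_smul c _ _).symm
    have hcw : c * w ^ (m + 1) = z ^ ((α : ℂ) - (β : ℂ)) := by
      rw [hc_def, hpow (m + 1), ← Complex.cpow_add _ _ hz]
      congr 1
      push_cast
      ring
    rw [h1, h2, h3, smul_sub, smul_smul, hcw]
    abel
  rw [key]
  have hzpos : 0 < ‖z‖ := norm_pos_iff.mpr hz
  have hE : (0 : ℝ) < 1 + ‖z‖ ^ α := by positivity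
  have hD : (0 : ℝ) < ‖z‖ ^ ((m : ℝ) * α + β) := Real.rpow_pos_of_pos hzpos _
  have hcabs : ‖c‖ = (‖z‖ ^ ((m : ℝ) * α + β))⁻¹ := by
    rw [hc_def, Complex.norm_cpow_of_ne_zero hz]
    simp only [Complex.neg_re, Complex.add_re, Complex.ofReal_re, Complex.mul_re,
      Complex.ofReal_im, Complex.natCast_re, Complex.natCast_im, Complex.neg_im,
      Complex.add_im, Complex.mul_im]
    rw [← Real.rpow_neg hzpos.le]
    norm_num
    ring_nf
  have hRy : ‖R ((A ^ (m + 1)) x)‖ ≤ M / (1 + ‖z‖ ^ α) * ‖(A ^ (m + 1)) x‖ := by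
    calc ‖R ((A ^ (m + 1)) x)‖ ≤ ‖R‖ * ‖(A ^ (m + 1)) x‖ := R.le_opNorm _
    _ ≤ M / (1 + ‖z‖ ^ α) * ‖(A ^ (m + 1)) x‖ := by
        gcongr
  calc ‖c • R ((A ^ (m + 1)) x)‖
      = (‖z‖ ^ ((m : ℝ) * α + β))⁻¹ * ‖R ((A ^ (m + 1)) x)‖ := by
        rw [norm_smul, hcabs]
    _ ≤ (‖z‖ ^ ((m : ℝ) * α + β))⁻¹ *
          (M / (1 + ‖z‖ ^ α) * ‖(A ^ (m + 1)) x‖) := by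
        gcongr
    _ = M * ‖(A ^ (m + 1)) x‖ /
          (‖z‖ ^ ((m : ℝ) * α + β) * (1 + ‖z‖ ^ α)) := by
        field_simp
end
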